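/- arXiv:1205.1015 — 6 statements merged into one kernel-verified Lean document; each statement's English description precedes it below -/
import Mathlib

section
/- Let k ≥ 1 and let f_1, …, f_k be real functions that are (k−1)-times differentiable on a real interval I (not reduced to a point). Assume that for every i with 1 ≤ i ≤ k the Wronskian W(f_1, …, f_i) has no zero in I. Then for any real constants a_1, …, a_k that are not all zero, the function a_1 f_1 + a_2 f_2 + … + a_k f_k has at most k−1 zeros in I counted with multiplicity; that is, the sum over all zeros x ∈ I of the multiplicity of x is at most k−1, where the multiplicity of a zero x of a C^{k−1} function g is the largest m ≤ k such that g(x) = g′(x) = … = g^{(m−1)}(x) = 0. -/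
open Set Finset

/-- The Wronskian of the first `j` functions of the family `f`, with derivatives
taken within the set `I`: the determinant of the `j × j` matrix whose `(r,c)` entry
is the `r`-th derivative (within `I`) of `f c` (indices starting from `0`). -/
noncomputable def wronskianOn (I : Set ℝ) (f : ℕ → ℝ → ℝ) (j : ℕ) (x : ℝ) : ℝ :=
  (Matrix.of fun r c : Fin j => iteratedDerivWithin (r : ℕ) (f (c : ℕ)) I x).det

lemma leibAux (r : ℕ) (A B : ℕ → ℝ) :
    (∑ s ∈ Finset.range (r+1), (r.choose s : ℝ) * (A (r+1-s) * B s))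
    + ∑ s ∈ Finset.range (r+1), (r.choose s : ℝ) * (A (r-s) * B (s+1))
    = ∑ s ∈ Finset.range (r+2), ((r+1).choose s : ℝ) * A (r+1-s) * B s := by
  have e1 : (∑ s ∈ Finset.range (r+1), (r.choose s : ℝ) * (A (r+1-s) * B s))
      = (∑ s ∈ Finset.range r, (r.choose (s+1) : ℝ) * (A (r-s) * B (s+1))) + A (r+1) * B 0 := by
    rw [Finset.sum_range_succ' (fun s => (r.choose s : ℝ) * (A (r+1-s) * B s)) r]
    simp [Nat.succ_sub_succ]
  have e2 : (∑ s ∈ Finset.range (r+1), (r.choose (s+1) : ℝ) * (A (r-s) * B (s+1)))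
      = ∑ s ∈ Finset.range r, (r.choose (s+1) : ℝ) * (A (r-s) * B (s+1)) := by
    rw [Finset.sum_range_succ, Nat.choose_succ_self]; simp
  have e3 : (∑ s ∈ Finset.range (r+2), ((r+1).choose s : ℝ) * A (r+1-s) * B s)
      = (∑ s ∈ Finset.range (r+1), ((r+1).choose (s+1) : ℝ) * (A (r-s) * B (s+1))) + A (r+1) * B 0 := by
    rw [Finset.sum_range_succ' (fun s => ((r+1).choose s : ℝ) * A (r+1-s) * B s) (r+1)]
    simp only [Nat.succ_sub_succ, Nat.choose_zero_right, Nat.cast_one, one_mul, Nat.add_sub_cancel]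
    congr 1
    exact Finset.sum_congr rfl fun s _ => by ring
  rw [e1, e3]
  have e4 : (∑ s ∈ Finset.range (r+1), ((r+1).choose (s+1) : ℝ) * (A (r-s) * B (s+1)))
      = (∑ s ∈ Finset.range (r+1), (r.choose s : ℝ) * (A (r-s) * B (s+1)))
      + ∑ s ∈ Finset.range (r+1), (r.choose (s+1) : ℝ) * (A (r-s) * B (s+1)) := by
    rw [← Finset.sum_add_distrib]
    refine Finset.sum_congr rfl fun s _ => ?_
    rw [Nat.choose_succ_succ]
    push_cast; ring
  rw [e4, e2]; ring


lemma leibnizWithin {I : Set ℝ} (hI : UniqueDiffOn ℝ I) {u g : ℝ → ℝ} {n : ℕ}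
    (hu : ContDiffOn ℝ n u I) (hg : ContDiffOn ℝ n g I) :
    ∀ r ≤ n, ∀ x ∈ I, iteratedDerivWithin r (fun y => u y * g y) I x =
      ∑ s ∈ Finset.range (r + 1),
        (r.choose s : ℝ) * iteratedDerivWithin (r - s) u I x * iteratedDerivWithin s g I x := by
  intro r
  induction r with
  | zero => intro _ x hx; simp [iteratedDerivWithin_zero]
  | succ r IH =>
    intro hr x hx
    have hr' : r ≤ n := Nat.le_of_succ_le hr
    have hdu : ∀ j ≤ r, DifferentiableWithinAt ℝ (iteratedDerivWithin j u I) I x := by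
      intro j hj
      exact (hu.differentiableOn_iteratedDerivWithin
        (by exact_mod_cast Nat.lt_of_le_of_lt hj (Nat.lt_of_lt_of_le (Nat.lt_succ_self r) hr))
        hI) x hx
    have hdg : ∀ j ≤ r, DifferentiableWithinAt ℝ (iteratedDerivWithin j g I) I x := by
      intro j hj
      exact (hg.differentiableOn_iteratedDerivWithin
        (by exact_mod_cast Nat.lt_of_le_of_lt hj (Nat.lt_of_lt_of_le (Nat.lt_succ_self r) hr))
        hI) x hx
    have hstep : ∀ j ≤ r, ∀ h : ℝ → ℝ,
        derivWithin (iteratedDerivWithin j h I) I x = iteratedDerivWithin (j+1) h I x := by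
      intro j hj h
      rw [iteratedDerivWithin_succ]
    rw [iteratedDerivWithin_succ,
      derivWithin_congr (fun y hy => IH hr' y hy) (IH hr' x hx)]
    rw [derivWithin_fun_sum (fun s hs => by
      exact ((hdu _ (Nat.sub_le _ _)).const_mul _ |>.mul (hdg _ (Nat.lt_succ_iff.mp (Finset.mem_range.mp hs)))))]
    have key : ∀ s ∈ Finset.range (r+1),
        derivWithin (fun y => (r.choose s : ℝ) * iteratedDerivWithin (r - s) u I y *
          iteratedDerivWithin s g I y) I x =
        (r.choose s : ℝ) * (iteratedDerivWithin (r + 1 - s) u I x * iteratedDerivWithin s g I x)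
        + (r.choose s : ℝ) * (iteratedDerivWithin (r - s) u I x * iteratedDerivWithin (s+1) g I x) := by
      intro s hs
      have hs' : s ≤ r := Nat.lt_succ_iff.mp (Finset.mem_range.mp hs)
      rw [derivWithin_fun_mul
        ((hdu _ (Nat.sub_le _ _)).const_mul _) (hdg _ hs')]
      rw [derivWithin_const_mul _ (hdu _ (Nat.sub_le _ _)),
        hstep _ (Nat.sub_le _ _) u, hstep _ hs' g]
      have : r - s + 1 = r + 1 - s := by omega
      rw [this]; ring
    rw [Finset.sum_congr rfl key, Finset.sum_add_distrib]
    exact leibAux r (fun j => iteratedDerivWithin j u I x) (fun j => iteratedDerivWithin j g I x)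

lemma vanish_mul {I : Set ℝ} (hI : UniqueDiffOn ℝ I) {u g : ℝ → ℝ} {n : ℕ}
    (hu : ContDiffOn ℝ n u I) (hg : ContDiffOn ℝ n g I) {x : ℝ} (hx : x ∈ I) {m : ℕ}
    (hm : m ≤ n + 1) (h0 : ∀ j < m, iteratedDerivWithin j g I x = 0) :
    ∀ j < m, iteratedDerivWithin j (fun y => u y * g y) I x = 0 := by
  intro j hj
  rw [leibnizWithin hI hu hg j (by omega) x hx]
  refine Finset.sum_eq_zero fun s hs => ?_
  have := Finset.mem_range.mp hs
  rw [h0 s (by omega)]; ring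

lemma rolleMult {I : Set ℝ} (hIc : Set.OrdConnected I) (hI : UniqueDiffOn ℝ I)
    {h : ℝ → ℝ} (hcont : ContinuousOn h I) (hdiff : DifferentiableOn ℝ h I)
    {K : ℕ} (hK : 2 ≤ K) :
    ∀ (S : Finset ℝ) (m : ℝ → ℕ),
      (∀ x ∈ S, x ∈ I ∧ 1 ≤ m x ∧ m x ≤ K ∧ ∀ j < m x, iteratedDerivWithin j h I x = 0) →
      ∃ (T : Finset ℝ) (m' : ℝ → ℕ),
        (∀ x ∈ T, x ∈ I ∧ m' x ≤ K - 1 ∧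
          ∀ j < m' x, iteratedDerivWithin j (derivWithin h I) I x = 0)
        ∧ (∑ x ∈ S, m x) - 1 ≤ ∑ x ∈ T, m' x
        ∧ ∀ t ∈ T, ∃ x ∈ S, t ≤ x := by
  classical
  intro S
  induction S using Finset.strongInduction with
  | _ S IH =>
  intro m hS
  rcases S.eq_empty_or_nonempty with rfl | hne
  · exact ⟨∅, m, by simp⟩
  · set xp := S.max' hne with hxp
    have hxpS : xp ∈ S := S.max'_mem hne
    obtain ⟨hxpI, hxp1, hxpK, hxpD⟩ := hS xp hxpS
    set S' := S.erase xp with hS'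
    have hsub : S' ⊂ S := Finset.erase_ssubset hxpS
    have hS'h : ∀ x ∈ S', x ∈ I ∧ 1 ≤ m x ∧ m x ≤ K ∧
        ∀ j < m x, iteratedDerivWithin j h I x = 0 :=
      fun x hx => hS x (Finset.erase_subset _ _ hx)
    obtain ⟨T', m'', hT'1, hT'2, hT'3⟩ := IH S' hsub m hS'h
    have hxpD' : ∀ j < m xp - 1, iteratedDerivWithin j (derivWithin h I) I xp = 0 := by
      intro j hj
      rw [← iteratedDerivWithin_succ']
      exact hxpD (j+1) (by omega)
    rcases S'.eq_empty_or_nonempty with hS'e | hS'ne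
    · refine ⟨{xp}, fun _ => m xp - 1, ?_, ?_, ?_⟩
      · intro x hx
        rw [Finset.mem_singleton] at hx
        subst hx
        exact ⟨hxpI, by simp only []; omega, hxpD'⟩
      · have : ∑ x ∈ S, m x = m xp := by
          rw [← Finset.add_sum_erase S m hxpS, ← hS', hS'e]; simp
        simp [this]
      · intro t ht
        rw [Finset.mem_singleton] at ht
        exact ⟨xp, hxpS, le_of_eq ht⟩
    · set z := S'.max' hS'ne with hz
      have hzS' : z ∈ S' := S'.max'_mem hS'ne
      obtain ⟨hzI, hz1, _, hzD⟩ := hS'h z hzS'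
      have hzxp : z < xp := by
        have h1 : z ∈ S := Finset.erase_subset _ _ hzS'
        have h2 : z ≠ xp := Finset.ne_of_mem_erase hzS'
        exact lt_of_le_of_ne (S.le_max' z h1) h2
      have hIoo : Set.Ioo z xp ⊆ I := fun t ht =>
        hIc.out hzI hxpI ⟨le_of_lt ht.1, le_of_lt ht.2⟩
      have hIcc : Set.Icc z xp ⊆ I := hIc.out hzI hxpI
      have hball : ∀ t ∈ Set.Ioo z xp, I ∈ nhds t := by
        intro t ht
        exact mem_nhds_iff.mpr ⟨Set.Ioo z xp, hIoo, isOpen_Ioo, ht⟩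
      have hrolle : ∃ y ∈ Set.Ioo z xp, derivWithin h I y = 0 := by
        apply exists_hasDerivAt_eq_zero hzxp (hcont.mono hIcc)
        · have h1 : h z = 0 := by simpa using hzD 0 (by omega)
          have h2 : h xp = 0 := by simpa using hxpD 0 (by omega)
          rw [h1, h2]
        · intro t ht
          exact ((hdiff t (hIoo ht)).hasDerivWithinAt).hasDerivAt (hball t ht)
      obtain ⟨y, hy, hyD⟩ := hrolle
      have hyI : y ∈ I := hIoo hy
      have hT'lt : ∀ t ∈ T', t ≤ z := by
        intro t ht
        obtain ⟨x, hxS', htx⟩ := hT'3 t ht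
        exact le_trans htx (S'.le_max' x hxS')
      have hyT' : y ∉ T' := fun hc => absurd (hT'lt y hc) (not_le.mpr hy.1)
      have hxpT' : xp ∉ T' := fun hc => absurd (hT'lt xp hc) (not_le.mpr hzxp)
      have hyxp : y ≠ xp := ne_of_lt hy.2
      set mf : ℝ → ℕ := fun t => if t = xp then m xp - 1 else if t = y then 1 else m'' t with hmf
      have ey : mf y = 1 := by simp [hmf, hyxp]
      have exp : mf xp = m xp - 1 := by simp [hmf]
      have eT : ∀ x ∈ T', mf x = m'' x := by
        intro x hx
        have hx1 : x ≠ xp := fun hc => hxpT' (hc ▸ hx)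
        have hx2 : x ≠ y := fun hc => hyT' (hc ▸ hx)
        simp [hmf, hx1, hx2]
      refine ⟨insert y (insert xp T'), mf, ?_, ?_, ?_⟩
      · intro x hx
        rcases Finset.mem_insert.mp hx with rfl | hx
        · refine ⟨hyI, by omega, ?_⟩
          intro j hj
          rw [ey] at hj
          have : j = 0 := by omega
          subst this
          simpa using hyD
        rcases Finset.mem_insert.mp hx with rfl | hx
        · exact ⟨hxpI, by omega, by rw [exp]; exact hxpD'⟩
        · obtain ⟨h1, h2, h3⟩ := hT'1 x hx
          exact ⟨h1, by rw [eT x hx]; exact h2, by rw [eT x hx]; exact h3⟩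
      · have hySet : y ∉ insert xp T' := by
          simp only [Finset.mem_insert]; push_neg; exact ⟨hyxp, hyT'⟩
        rw [Finset.sum_insert hySet, Finset.sum_insert hxpT']
        have e3 : ∑ x ∈ T', mf x = ∑ x ∈ T', m'' x :=
          Finset.sum_congr rfl eT
        have e4 : ∑ x ∈ S, m x = m xp + ∑ x ∈ S', m x := by
          rw [← Finset.add_sum_erase S m hxpS]
        rw [ey, exp, e3, e4]
        omega
      · intro t ht
        rcases Finset.mem_insert.mp ht with rfl | ht
        · exact ⟨xp, hxpS, le_of_lt hy.2⟩
        rcases Finset.mem_insert.mp ht with rfl | ht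
        · exact ⟨xp, hxpS, le_refl _⟩
        · obtain ⟨x, hxS', htx⟩ := hT'3 t ht
          exact ⟨x, Finset.erase_subset _ _ hxS', htx⟩

lemma iterDerivWithin_const {I : Set ℝ} (hI : UniqueDiffOn ℝ I) (c : ℝ) :
    ∀ (s : ℕ), ∀ x ∈ I, iteratedDerivWithin s (fun _ => c) I x = if s = 0 then c else 0 := by
  intro s
  induction s generalizing c with
  | zero => intro x hx; simp
  | succ t IH =>
    intro x hx
    rw [iteratedDerivWithin_succ']
    have heq : Set.EqOn (derivWithin (fun _ => c) I) (fun _ => (0:ℝ)) I := fun y hy =>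
      by simp
    rw [iteratedDerivWithin_congr heq hx, IH 0 x hx]
    simp

lemma wronskian_div {I : Set ℝ} (hI : UniqueDiffOn ℝ I) (f : ℕ → ℝ → ℝ) {n j : ℕ}
    (hn : j ≤ n) (hf : ∀ c ≤ j, ContDiffOn ℝ n (f c) I)
    (h0 : ∀ y ∈ I, f 0 y ≠ 0) {x : ℝ} (hx : x ∈ I) :
    wronskianOn I f (j+1) x =
      (f 0 x)^(j+1) *
        wronskianOn I (fun c => derivWithin (fun y => f (c+1) y * (f 0 y)⁻¹) I) j x := by
  classical
  set h : ℕ → ℝ → ℝ := fun c y => f c y * (f 0 y)⁻¹ with hh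
  have hu : ContDiffOn ℝ n (fun y => (f 0 y)⁻¹) I :=
    (hf 0 (Nat.zero_le _)).inv h0
  have hhc : ∀ c ≤ j, ContDiffOn ℝ n (h c) I := fun c hc => (hf c hc).mul hu
  -- the matrices
  set M : Matrix (Fin (j+1)) (Fin (j+1)) ℝ :=
    Matrix.of fun s c : Fin (j+1) => iteratedDerivWithin (s : ℕ) (h (c : ℕ)) I x with hM
  set L : Matrix (Fin (j+1)) (Fin (j+1)) ℝ :=
    Matrix.of fun r s : Fin (j+1) => if (s:ℕ) ≤ (r:ℕ) then
      ((r:ℕ).choose (s:ℕ) : ℝ) * iteratedDerivWithin ((r:ℕ) - (s:ℕ)) (f 0) I x else 0 with hL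
  -- step 1 : wronskianOn f (j+1) = det (L * M)
  have step1 : wronskianOn I f (j+1) x = (L * M).det := by
    unfold wronskianOn
    congr 1
    ext r c
    simp only [Matrix.of_apply]
    have hEq : Set.EqOn (f (c:ℕ)) (fun y => f 0 y * h (c:ℕ) y) I := by
      intro y hy
      simp only [hh]
      have hne := h0 y hy
      field_simp
    rw [iteratedDerivWithin_congr hEq hx]
    rw [leibnizWithin hI (hf 0 (Nat.zero_le _)) (hhc (c:ℕ) (Nat.le_of_lt_succ c.isLt))
      (r:ℕ) (le_trans (Nat.le_of_lt_succ r.isLt) hn) x hx]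
    rw [Matrix.mul_apply]
    set g : ℕ → ℝ := fun s => (if s ≤ (r:ℕ) then ((r:ℕ).choose s : ℝ) *
      iteratedDerivWithin ((r:ℕ)-s) (f 0) I x else 0) *
      iteratedDerivWithin s (h (c:ℕ)) I x with hg
    have e1 : ∑ s : Fin (j+1), L r s * M s c = ∑ s ∈ Finset.range (j+1), g s := by
      rw [← Fin.sum_univ_eq_sum_range g (j+1)]
      rfl
    have e2 : ∑ s ∈ Finset.range ((r:ℕ)+1), g s = ∑ s ∈ Finset.range (j+1), g s := by
      apply Finset.sum_subset (Finset.range_subset_range.mpr (by omega : (r:ℕ)+1 ≤ j+1))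
      intro s _ hs
      rw [Finset.mem_range, not_lt] at hs
      simp only [hg, if_neg (by omega : ¬ s ≤ (r:ℕ)), zero_mul]
    rw [e1, ← e2]
    refine Finset.sum_congr rfl fun s hs => ?_
    rw [Finset.mem_range] at hs
    simp only [hg, if_pos (by omega : s ≤ (r:ℕ))]
  -- step 2 : det L = (f 0 x)^(j+1)
  have step2 : L.det = (f 0 x)^(j+1) := by
    have htri : L.BlockTriangular OrderDual.toDual := by
      intro p q hpq
      have : (p:ℕ) < (q:ℕ) := hpq
      simp only [hL, Matrix.of_apply, if_neg (by omega : ¬ (q:ℕ) ≤ (p:ℕ))]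
    rw [Matrix.det_of_lowerTriangular L htri]
    have : ∀ i : Fin (j+1), L i i = f 0 x := by
      intro i
      simp only [hL, Matrix.of_apply, le_refl, if_true, Nat.choose_self, Nat.cast_one,
        Nat.sub_self, one_mul, iteratedDerivWithin_zero]
    rw [Finset.prod_congr rfl (fun i _ => this i), Finset.prod_const, Finset.card_univ,
      Fintype.card_fin]
  -- step 3 : first column of M
  have hcol : ∀ s : Fin (j+1), M s 0 = if (s:ℕ) = 0 then 1 else 0 := by
    intro s
    have hEq : Set.EqOn (h 0) (fun _ => (1:ℝ)) I := by
      intro y hy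
      simp only [hh]
      exact mul_inv_cancel₀ (h0 y hy)
    simp only [hM, Matrix.of_apply, Fin.val_zero]
    rw [iteratedDerivWithin_congr hEq hx, iterDerivWithin_const hI 1 (s:ℕ) x hx]
  -- step 4 : det M = wronskian of derived family
  have step4 : M.det =
      wronskianOn I (fun c => derivWithin (fun y => f (c+1) y * (f 0 y)⁻¹) I) j x := by
    rw [Matrix.det_succ_column_zero]
    rw [Finset.sum_eq_single (0 : Fin (j+1))]
    · rw [hcol 0]
      simp only [Fin.val_zero, if_pos rfl, Fin.val_zero, pow_zero, one_mul, mul_one,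
        Fin.succAbove_zero]
      unfold wronskianOn
      have hsub : M.submatrix Fin.succ Fin.succ = Matrix.of fun r c : Fin j =>
          iteratedDerivWithin (r : ℕ)
            ((fun c => derivWithin (fun y => f (c+1) y * (f 0 y)⁻¹) I) (c : ℕ)) I x := by
        ext r c
        simp only [Matrix.submatrix_apply, Matrix.of_apply, hM, Fin.val_succ]
        rw [iteratedDerivWithin_succ']
      rw [hsub]
      simp
    · intro i _ hi
      rw [hcol i]
      have : (i:ℕ) ≠ 0 := fun hc => hi (Fin.ext hc)
      rw [if_neg this]
      ring
    · intro hc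
      exact absurd (Finset.mem_univ _) hc
  rw [step1, Matrix.det_mul, step2, step4]


lemma wronskianOn_one {I : Set ℝ} (f : ℕ → ℝ → ℝ) (x : ℝ) :
    wronskianOn I f 1 x = f 0 x := by
  unfold wronskianOn
  rw [Matrix.det_fin_one]
  simp

lemma mainLemma : ∀ k : ℕ, 1 ≤ k → ∀ I : Set ℝ, Set.OrdConnected I → UniqueDiffOn ℝ I →
    ∀ f : ℕ → ℝ → ℝ, (∀ i < k, ContDiffOn ℝ (k - 1 : ℕ) (f i) I) →
    (∀ i, 1 ≤ i → i ≤ k → ∀ x ∈ I, wronskianOn I f i x ≠ 0) →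
    ∀ a : ℕ → ℝ, (∃ i < k, a i ≠ 0) →
    ∀ (S : Finset ℝ) (m : ℝ → ℕ),
      (∀ x ∈ S, x ∈ I ∧ m x ≤ k ∧ ∀ j < m x,
        iteratedDerivWithin j (fun y => ∑ i ∈ Finset.range k, a i * f i y) I x = 0) →
      ∑ x ∈ S, m x ≤ k - 1 := by
  intro k hk
  induction k, hk using Nat.le_induction with
  | base =>
    intro I hIc hI f hdiff hW a ha S m hS
    obtain ⟨i, hi, hai⟩ := ha
    interval_cases i
    have hne : ∀ x ∈ I, f 0 x ≠ 0 := by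
      intro x hx
      have := hW 1 le_rfl le_rfl x hx
      rwa [wronskianOn_one] at this
    have : ∀ x ∈ S, m x = 0 := by
      intro x hx
      obtain ⟨hxI, _, hD⟩ := hS x hx
      by_contra hmx
      have h0 := hD 0 (Nat.pos_of_ne_zero hmx)
      rw [iteratedDerivWithin_zero] at h0
      simp only [Finset.sum_range_one] at h0
      exact (mul_ne_zero hai (hne x hxI)) h0
    simp [Finset.sum_congr rfl this]
  | succ k hk IH =>
    intro I hIc hI f hdiff hW a ha S m hS
    have hne : ∀ x ∈ I, f 0 x ≠ 0 := by
      intro x hx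
      have := hW 1 (by omega) (by omega) x hx
      rwa [wronskianOn_one] at this
    have hdiff' : ∀ i < k + 1, ContDiffOn ℝ (k : ℕ) (f i) I := by
      intro i hi
      have := hdiff i hi
      simpa using this
    by_cases hcase : ∀ i, 1 ≤ i → i < k + 1 → a i = 0
    · -- g = a 0 * f 0, nonvanishing
      obtain ⟨i, hi, hai⟩ := ha
      have hi0 : i = 0 := by
        by_contra hi0
        exact hai (hcase i (by omega) hi)
      subst hi0
      have hgs : ∀ y, (∑ i ∈ Finset.range (k+1), a i * f i y) = a 0 * f 0 y := by
        intro y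
        apply Finset.sum_eq_single_of_mem 0 (Finset.mem_range.mpr (by omega))
        intro i hi hine
        rw [hcase i (by omega) (Finset.mem_range.mp hi)]
        ring
      have hz : ∀ x ∈ S, m x = 0 := by
        intro x hx
        obtain ⟨hxI, _, hD⟩ := hS x hx
        by_contra hmx
        have h0 := hD 0 (Nat.pos_of_ne_zero hmx)
        rw [iteratedDerivWithin_zero] at h0
        rw [hgs x] at h0
        exact (mul_ne_zero hai (hne x hxI)) h0
      simp [Finset.sum_congr rfl hz]
    · push_neg at hcase
      obtain ⟨i₀, hi₀1, hi₀k, hai₀⟩ := hcase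
      set u : ℝ → ℝ := fun y => (f 0 y)⁻¹ with hu_def
      have hu : ContDiffOn ℝ (k : ℕ) u I := (hdiff' 0 (by omega)).inv hne
      set g : ℝ → ℝ := fun y => ∑ i ∈ Finset.range (k+1), a i * f i y with hg_def
      have hg : ContDiffOn ℝ (k : ℕ) g I := by
        apply ContDiffOn.sum
        intro i hi
        exact (hdiff' i (Finset.mem_range.mp hi)).const_smul (a i)
      set H : ℝ → ℝ := fun y => u y * g y with hH_def
      have hH : ContDiffOn ℝ (k : ℕ) H I := hu.mul hg
      have hk1 : (1 : WithTop ℕ∞) ≤ ((k:ℕ) : WithTop ℕ∞) := by exact_mod_cast hk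
      -- the filtered set of genuine zeros
      set S' := S.filter (fun x => 1 ≤ m x) with hS'_def
      have hS'h : ∀ x ∈ S', x ∈ I ∧ 1 ≤ m x ∧ m x ≤ k + 1 ∧
          ∀ j < m x, iteratedDerivWithin j H I x = 0 := by
        intro x hx
        rw [hS'_def, Finset.mem_filter] at hx
        obtain ⟨hxS, hx1⟩ := hx
        obtain ⟨hxI, hxk, hD⟩ := hS x hxS
        refine ⟨hxI, hx1, hxk, ?_⟩
        exact vanish_mul hI hu hg hxI (by omega) hD
      obtain ⟨T, m', hT1, hT2, _⟩ := rolleMult hIc hI (hH.continuousOn)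
        (hH.differentiableOn (zero_lt_one.trans_le hk1).ne') (by omega : 2 ≤ k + 1) S' m hS'h
      -- the derived family
      set F : ℕ → ℝ → ℝ := fun c => derivWithin (fun y => f (c+1) y * (f 0 y)⁻¹) I with hF_def
      set b : ℕ → ℝ := fun i => a (i+1) with hb_def
      set G : ℝ → ℝ := fun y => ∑ i ∈ Finset.range k, b i * F i y with hG_def
      -- EqOn (derivWithin H I) G I
      have hmulC : ∀ c, c < k + 1 → ContDiffOn ℝ (k:ℕ) (fun y => f c y * u y) I :=
        fun c hc => (hdiff' c hc).mul hu
      have hEqOn : Set.EqOn (derivWithin H I) G I := by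
        intro x' hx'
        have hHeq : Set.EqOn H (fun y => a 0 + ∑ i ∈ Finset.range k,
            a (i+1) * (f (i+1) y * u y)) I := by
          intro y hy
          simp only [hH_def, hg_def]
          rw [Finset.mul_sum]
          rw [Finset.sum_range_succ' (fun i => u y * (a i * f i y)) k]
          have h00 : u y * (a 0 * f 0 y) = a 0 := by
            simp only [hu_def]
            rw [mul_comm (a 0), ← mul_assoc, inv_mul_cancel₀ (hne y hy), one_mul]
          rw [h00, add_comm]
          congr 1
          exact Finset.sum_congr rfl fun i _ => by ring
        rw [derivWithin_congr hHeq (hHeq hx')]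
        rw [derivWithin_const_add]
        have hdterm : ∀ i ∈ Finset.range k, DifferentiableWithinAt ℝ
            (fun y => a (i+1) * (f (i+1) y * u y)) I x' := by
          intro i hi
          have hik := Finset.mem_range.mp hi
          exact (((hmulC (i+1) (by omega)).differentiableOn (zero_lt_one.trans_le hk1).ne') x' hx').const_mul _
        have hdsum : derivWithin (fun y => ∑ i ∈ Finset.range k,
            a (i+1) * (f (i+1) y * u y)) I x' =
            ∑ i ∈ Finset.range k, a (i+1) * derivWithin (fun y => f (i+1) y * u y) I x' := by
          rw [derivWithin_fun_sum hdterm]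
          refine Finset.sum_congr rfl fun i hi => ?_
          have hik := Finset.mem_range.mp hi
          rw [derivWithin_const_mul _
            (((hmulC (i+1) (by omega)).differentiableOn (zero_lt_one.trans_le hk1).ne') x' hx')]
        rw [hdsum]
      -- hypotheses of IH for the derived family
      have hk' : ((k - 1 : ℕ) : WithTop ℕ∞) + 1 ≤ ((k : ℕ) : WithTop ℕ∞) := by
        exact_mod_cast Nat.le_of_eq (by omega : (k - 1) + 1 = k)
      have hdiffF : ∀ i < k, ContDiffOn ℝ (k - 1 : ℕ) (F i) I := by
        intro i hi
        exact (hmulC (i+1) (by omega)).derivWithin hI hk'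
      have hWF : ∀ i, 1 ≤ i → i ≤ k → ∀ x ∈ I, wronskianOn I F i x ≠ 0 := by
        intro i h1 h2 x hx hzero
        have hid := wronskian_div hI f (h2 : i ≤ k)
          (fun c hc => hdiff' c (by omega)) hne hx
        have hWf := hW (i+1) (by omega) (by omega) x hx
        rw [hid] at hWf
        rw [hF_def] at hzero
        rw [hzero, mul_zero] at hWf
        exact hWf rfl
      have hbne : ∃ i < k, b i ≠ 0 := by
        refine ⟨i₀ - 1, by omega, ?_⟩
        rw [hb_def]
        simp only []
        have : i₀ - 1 + 1 = i₀ := by omega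
        rw [this]
        exact hai₀
      -- transfer vanishing from derivWithin H I to G
      have hTG : ∀ x ∈ T, x ∈ I ∧ m' x ≤ k ∧
          ∀ j < m' x, iteratedDerivWithin j (fun y => ∑ i ∈ Finset.range k, b i * F i y) I x = 0 := by
        intro x hx
        obtain ⟨hxI, hxk, hD⟩ := hT1 x hx
        refine ⟨hxI, by omega, ?_⟩
        intro j hj
        rw [← iteratedDerivWithin_congr hEqOn hxI]
        exact hD j hj
      have hfin := IH I hIc hI F hdiffF hWF b hbne T m' hTG
      -- put together
      have hsum1 : ∑ x ∈ S, m x = ∑ x ∈ S', m x := by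
        rw [hS'_def]
        rw [Finset.sum_filter_of_ne]
        intro x hx hmx
        omega
      omega

/-- Theorem (zeros with multiplicity of a linear combination when the Wronskians do not
vanish): if `f 0, …, f (k-1)` are `(k-1)`-times differentiable on an interval `I` and all
the Wronskians `W(f 0, …, f (i-1))`, `1 ≤ i ≤ k`, have no zero on `I`, then any nontrivial
linear combination has at most `k - 1` zeros on `I` counted with multiplicity. -/
theorem stmt0 (k : ℕ) (hk : 1 ≤ k) (I : Set ℝ) (hI : I.OrdConnected) (hI' : I.Nontrivial)
    (f : ℕ → ℝ → ℝ)
    (hdiff : ∀ i < k, ContDiffOn ℝ (k - 1 : ℕ) (f i) I)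
    (hW : ∀ i, 1 ≤ i → i ≤ k → ∀ x ∈ I, wronskianOn I f i x ≠ 0)
    (a : ℕ → ℝ) (ha : ∃ i < k, a i ≠ 0) :
    ∀ S : Finset ℝ,
      (∀ x ∈ S, x ∈ I ∧ (∑ i ∈ Finset.range k, a i * f i x) = 0) →
      (∑ x ∈ S,
        sSup {m : ℕ | m ≤ k ∧ ∀ j < m,
          iteratedDerivWithin j (fun y => ∑ i ∈ Finset.range k, a i * f i y) I x = 0})
        ≤ k - 1 := by
  intro S hS
  obtain ⟨p, hp, q, hq, hpq⟩ := hI'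
  have hint : (interior I).Nonempty := by
    rcases lt_or_gt_of_ne hpq with h | h
    · refine ⟨(p+q)/2, interior_maximal
        (fun t ht => hI.out hp hq (Set.Ioo_subset_Icc_self ht)) isOpen_Ioo ?_⟩
      refine ⟨by linarith, by linarith⟩
    · refine ⟨(p+q)/2, interior_maximal
        (fun t ht => hI.out hq hp (Set.Ioo_subset_Icc_self ht)) isOpen_Ioo ?_⟩
      refine ⟨by linarith, by linarith⟩
  have hud : UniqueDiffOn ℝ I := uniqueDiffOn_convex (convex_iff_ordConnected.mpr hI) hint
  apply mainLemma k hk I hI hud f hdiff hW a ha S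
  intro x hx
  obtain ⟨hxI, _⟩ := hS x hx
  have hbdd : BddAbove {m : ℕ | m ≤ k ∧ ∀ j < m,
      iteratedDerivWithin j (fun y => ∑ i ∈ Finset.range k, a i * f i y) I x = 0} :=
    ⟨k, fun m hm => hm.1⟩
  have h0mem : (0:ℕ) ∈ {m : ℕ | m ≤ k ∧ ∀ j < m,
      iteratedDerivWithin j (fun y => ∑ i ∈ Finset.range k, a i * f i y) I x = 0} :=
    ⟨Nat.zero_le _, fun j hj => absurd hj (Nat.not_lt_zero j)⟩
  have hmem := Nat.sSup_mem ⟨0, h0mem⟩ hbdd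
  exact ⟨hxI, hmem.1, hmem.2⟩
end

section
/- Let f_1, …, f_k be real analytic functions on a real interval I, and suppose that for each i with 1 ≤ i ≤ k the Wronskian W(f_1, …, f_i) has only finitely many zeros in I. Then for any real constants a_1, …, a_k that are not all zero, Z_I(a_1 f_1 + … + a_k f_k) ≤ (1 + Σ_{i=1}^k Z_I(W(f_1, …, f_i)))·k − 1. -/
open Set Filter
open scoped ContDiff

namespace StmtAux

/-- Plain (global) Wronskian. -/
noncomputable def wr (h : ℕ → ℝ → ℝ) (j : ℕ) (x : ℝ) : ℝ :=
  (Matrix.of fun r c : Fin j => iteratedDeriv (r : ℕ) (h (c : ℕ)) x).det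

/-- Quotient family. -/
noncomputable def qd (h : ℕ → ℝ → ℝ) (c : ℕ) : ℝ → ℝ := fun y => h c y / h 0 y

/-- Derived family. -/
noncomputable def pd (h : ℕ → ℝ → ℝ) (c : ℕ) : ℝ → ℝ := deriv (fun y => h (c + 1) y / h 0 y)

lemma wr_one (h : ℕ → ℝ → ℝ) (t : ℝ) : wr h 1 t = h 0 t := by
  simp [wr, Matrix.det_fin_one]

lemma wronskianOn_one (I : Set ℝ) (f : ℕ → ℝ → ℝ) (x : ℝ) :
    wronskianOn I f 1 x = f 0 x := by
  simp [wronskianOn, Matrix.det_fin_one]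

lemma wr_congr {h h' : ℕ → ℝ → ℝ} (j : ℕ) (x : ℝ) (hh : ∀ c < j, h c = h' c) :
    wr h j x = wr h' j x := by
  unfold wr
  congr 1
  ext r c
  simp only [Matrix.of_apply]
  rw [hh c c.isLt]

lemma diffAt_iteratedDeriv {H : ℝ → ℝ} {x : ℝ} (h : ContDiffAt ℝ ∞ H x) (n : ℕ) :
    DifferentiableAt ℝ (iteratedDeriv n H) x := by
  have h1 : ContDiffAt ℝ 1 (iteratedFDeriv ℝ n H) x :=
    h.iteratedFDeriv_right (by exact_mod_cast le_top)
  have h2 : DifferentiableAt ℝ (iteratedFDeriv ℝ n H) x := h1.differentiableAt one_ne_zero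
  rw [iteratedDeriv_eq_equiv_comp]
  exact ((ContinuousMultilinearMap.piFieldEquiv ℝ (Fin n) ℝ).symm.toContinuousLinearEquiv
    |>.differentiable.differentiableAt).comp x h2

lemma iteratedDeriv_const_fun (c : ℝ) : ∀ (s : ℕ) (x : ℝ),
    iteratedDeriv s (fun _ : ℝ => c) x = if s = 0 then c else 0 := by
  intro s
  induction s generalizing c with
  | zero => intro x; simp
  | succ n IH =>
    intro x
    rw [iteratedDeriv_succ']
    have : deriv (fun _ : ℝ => c) = fun _ : ℝ => (0 : ℝ) := by
      funext y; exact deriv_const y c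
    rw [this, IH 0 x]
    simp

/-- Leibniz rule for iterated derivatives of smooth functions on an open set. -/
lemma iteratedDeriv_mul_eq {U : Set ℝ} (hU : IsOpen U) {f g : ℝ → ℝ}
    (hf : ContDiffOn ℝ ∞ f U) (hg : ContDiffOn ℝ ∞ g U) :
    ∀ (n : ℕ) {x : ℝ}, x ∈ U → iteratedDeriv n (fun y => f y * g y) x =
      ∑ s ∈ Finset.range (n + 1),
        (n.choose s : ℝ) * (iteratedDeriv s f x * iteratedDeriv (n - s) g x) := by
  intro n
  induction n with
  | zero => intro x hx; simp
  | succ n IH =>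
    intro x hx
    have hev : iteratedDeriv n (fun y => f y * g y) =ᶠ[nhds x]
        fun y => ∑ s ∈ Finset.range (n + 1),
          (n.choose s : ℝ) * (iteratedDeriv s f y * iteratedDeriv (n - s) g y) := by
      filter_upwards [hU.mem_nhds hx] with y hy using IH hy
    have hdf : ∀ m, DifferentiableAt ℝ (iteratedDeriv m f) x := fun m =>
      diffAt_iteratedDeriv (hf.contDiffAt (hU.mem_nhds hx)) m
    have hdg : ∀ m, DifferentiableAt ℝ (iteratedDeriv m g) x := fun m =>
      diffAt_iteratedDeriv (hg.contDiffAt (hU.mem_nhds hx)) m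
    rw [iteratedDeriv_succ, hev.deriv_eq]
    rw [deriv_fun_sum (fun s _ => by
      exact (((hdf s).mul (hdg (n - s))).const_mul _))]
    have hterm : ∀ s ∈ Finset.range (n + 1),
        deriv (fun y => (n.choose s : ℝ) *
            (iteratedDeriv s f y * iteratedDeriv (n - s) g y)) x =
          (n.choose s : ℝ) * (iteratedDeriv (s + 1) f x * iteratedDeriv (n - s) g x)
            + (n.choose s : ℝ) * (iteratedDeriv s f x * iteratedDeriv (n + 1 - s) g x) := by
      intro s hs
      have hsn : s ≤ n := Nat.lt_succ_iff.mp (Finset.mem_range.mp hs)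
      rw [deriv_const_mul _ (d := fun y => iteratedDeriv s f y * iteratedDeriv (n - s) g y) ((hdf s).mul (hdg (n - s))), deriv_fun_mul (hdf s) (hdg (n - s))]
      rw [← iteratedDeriv_succ, ← iteratedDeriv_succ]
      have : n - s + 1 = n + 1 - s := by omega
      rw [this]
      ring
    rw [Finset.sum_congr rfl hterm, Finset.sum_add_distrib]
    have key := Finset.sum_choose_succ_mul
      (fun i j => iteratedDeriv i f x * iteratedDeriv j g x) n
    rw [key]
    ring

/-- The key factorization identity:
`W(h₀,…,h_m) = h₀^{m+1} · W((h₁/h₀)',…,(h_m/h₀)')`. -/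
lemma wr_factor {U : Set ℝ} (hU : IsOpen U) (h : ℕ → ℝ → ℝ) (m : ℕ)
    (hsm : ∀ c ≤ m, ContDiffOn ℝ ∞ (h c) U) (h0 : ∀ x ∈ U, h 0 x ≠ 0)
    {t : ℝ} (ht : t ∈ U) :
    wr h (m + 1) t = h 0 t ^ (m + 1) * wr (pd h) m t := by
  classical
  have hsmq : ∀ c ≤ m, ContDiffOn ℝ ∞ (qd h c) U := by
    intro c hc
    exact (hsm c hc).div (hsm 0 (Nat.zero_le m)) h0
  have hAeq : (Matrix.of fun r c : Fin (m + 1) =>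
        iteratedDeriv (r : ℕ) (h (c : ℕ)) t) =
      (Matrix.of fun r s : Fin (m + 1) =>
        if (s : ℕ) ≤ (r : ℕ) then ((r : ℕ).choose s : ℝ) * iteratedDeriv ((r : ℕ) - s) (h 0) t
        else 0) *
      (Matrix.of fun s c : Fin (m + 1) => iteratedDeriv (s : ℕ) (qd h (c : ℕ)) t) := by
    ext r c
    have hcongr : iteratedDeriv (r : ℕ) (h c) t =
        iteratedDeriv (r : ℕ) (fun y => qd h c y * h 0 y) t := by
      apply Filter.EventuallyEq.iteratedDeriv_eq
      filter_upwards [hU.mem_nhds ht] with y hy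
      exact (div_mul_cancel₀ (h c y) (h0 y hy)).symm
    have hleib := iteratedDeriv_mul_eq hU (hsmq c (Nat.lt_succ_iff.mp c.isLt))
      (hsm 0 (Nat.zero_le m)) (r : ℕ) ht
    rw [Matrix.of_apply, Matrix.mul_apply, hcongr, hleib]
    have e2 : ∑ s ∈ Finset.range (m + 1),
        (if s ≤ (r : ℕ) then ((r : ℕ).choose s : ℝ) *
          iteratedDeriv ((r : ℕ) - s) (h 0) t else 0) * iteratedDeriv s (qd h (c : ℕ)) t =
        ∑ s ∈ Finset.range ((r : ℕ) + 1),
        (if s ≤ (r : ℕ) then ((r : ℕ).choose s : ℝ) *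
          iteratedDeriv ((r : ℕ) - s) (h 0) t else 0) * iteratedDeriv s (qd h (c : ℕ)) t := by
      refine (Finset.sum_subset (Finset.range_subset_range.mpr (Nat.succ_le_succ
        (Nat.lt_succ_iff.mp r.isLt))) ?_).symm
      intro s hs hns
      rw [if_neg (fun hle => hns (Finset.mem_range.mpr (by omega)))]
      simp
    calc ∑ s ∈ Finset.range ((r : ℕ) + 1), ((r : ℕ).choose s : ℝ) *
          (iteratedDeriv s (qd h (c : ℕ)) t * iteratedDeriv ((r : ℕ) - s) (h 0) t)
        = ∑ s ∈ Finset.range ((r : ℕ) + 1),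
          (if s ≤ (r : ℕ) then ((r : ℕ).choose s : ℝ) *
            iteratedDeriv ((r : ℕ) - s) (h 0) t else 0) * iteratedDeriv s (qd h (c : ℕ)) t := by
          apply Finset.sum_congr rfl
          intro s hs
          rw [if_pos (Nat.lt_succ_iff.mp (Finset.mem_range.mp hs))]
          ring
      _ = ∑ s ∈ Finset.range (m + 1),
          (if s ≤ (r : ℕ) then ((r : ℕ).choose s : ℝ) *
            iteratedDeriv ((r : ℕ) - s) (h 0) t else 0) * iteratedDeriv s (qd h (c : ℕ)) t :=
          e2.symm
      _ = ∑ s' : Fin (m + 1), (fun s : ℕ =>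
            (if s ≤ (r : ℕ) then ((r : ℕ).choose s : ℝ) *
              iteratedDeriv ((r : ℕ) - s) (h 0) t else 0) *
            iteratedDeriv s (qd h (c : ℕ)) t) (s' : ℕ) :=
          (Fin.sum_univ_eq_sum_range _ (m + 1)).symm
      _ = ∑ s' : Fin (m + 1), (Matrix.of fun r s : Fin (m + 1) =>
            if (s : ℕ) ≤ (r : ℕ) then ((r : ℕ).choose s : ℝ) *
              iteratedDeriv ((r : ℕ) - s) (h 0) t else 0) r s' *
            (Matrix.of fun s c : Fin (m + 1) =>
              iteratedDeriv (s : ℕ) (qd h (c : ℕ)) t) s' c := by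
          apply Finset.sum_congr rfl
          intro s' _
          simp only [Matrix.of_apply]
  have hdet : wr h (m + 1) t =
      (Matrix.of fun r s : Fin (m + 1) =>
        if (s : ℕ) ≤ (r : ℕ) then ((r : ℕ).choose s : ℝ) * iteratedDeriv ((r : ℕ) - s) (h 0) t
        else 0).det *
      (Matrix.of fun s c : Fin (m + 1) => iteratedDeriv (s : ℕ) (qd h (c : ℕ)) t).det := by
    rw [wr, hAeq, Matrix.det_mul]
  have hdetL : (Matrix.of fun r s : Fin (m + 1) =>
      if (s : ℕ) ≤ (r : ℕ) then ((r : ℕ).choose s : ℝ) * iteratedDeriv ((r : ℕ) - s) (h 0) t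
      else 0).det = h 0 t ^ (m + 1) := by
    rw [Matrix.det_of_lowerTriangular _ (by
      intro i j hij
      have hij' : (i : ℕ) < (j : ℕ) := hij
      simp only [Matrix.of_apply]
      rw [if_neg (by omega)])]
    have : ∀ i : Fin (m + 1), (Matrix.of fun r s : Fin (m + 1) =>
        if (s : ℕ) ≤ (r : ℕ) then ((r : ℕ).choose s : ℝ) * iteratedDeriv ((r : ℕ) - s) (h 0) t
        else 0) i i = h 0 t := by
      intro i
      simp [Matrix.of_apply, Nat.choose_self]
    rw [Finset.prod_congr rfl (fun i _ => this i)]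
    simp [Finset.card_univ]
  have hcol0 : ∀ s : Fin (m + 1),
      (Matrix.of fun s c : Fin (m + 1) => iteratedDeriv (s : ℕ) (qd h (c : ℕ)) t) s 0 =
        if (s : ℕ) = 0 then 1 else 0 := by
    intro s
    simp only [Matrix.of_apply]
    have : iteratedDeriv (s : ℕ) (qd h 0) t = iteratedDeriv (s : ℕ) (fun _ : ℝ => (1:ℝ)) t := by
      apply Filter.EventuallyEq.iteratedDeriv_eq
      filter_upwards [hU.mem_nhds ht] with y hy
      exact div_self (h0 y hy)
    rw [show ((0 : Fin (m+1)) : ℕ) = 0 from rfl, this, iteratedDeriv_const_fun]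
  have hdetN : (Matrix.of fun s c : Fin (m + 1) =>
      iteratedDeriv (s : ℕ) (qd h (c : ℕ)) t).det = wr (pd h) m t := by
    have hsub : ((Matrix.of fun s c : Fin (m + 1) =>
        iteratedDeriv (s : ℕ) (qd h (c : ℕ)) t).submatrix (Fin.succAbove 0) Fin.succ) =
        (Matrix.of fun r c : Fin m => iteratedDeriv (r : ℕ) (pd h (c : ℕ)) t) := by
      ext r c
      simp only [Matrix.submatrix_apply, Matrix.of_apply]
      rw [congrFun Fin.succAbove_zero r]
      rw [Fin.val_succ, Fin.val_succ, iteratedDeriv_succ']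
      rfl
    have hzero : ∀ b ∈ (Finset.univ : Finset (Fin (m + 1))), b ≠ 0 →
        (-1 : ℝ) ^ (b : ℕ) * (Matrix.of fun s c : Fin (m + 1) =>
          iteratedDeriv (s : ℕ) (qd h (c : ℕ)) t) b 0 *
          ((Matrix.of fun s c : Fin (m + 1) =>
            iteratedDeriv (s : ℕ) (qd h (c : ℕ)) t).submatrix b.succAbove Fin.succ).det = 0 := by
      intro b _ hb
      rw [hcol0 b, if_neg (fun hb0 => hb (Fin.ext (by simpa using hb0)))]
      simp
    rw [Matrix.det_succ_column_zero,
      Finset.sum_eq_single_of_mem (0 : Fin (m + 1)) (Finset.mem_univ _) hzero,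
      hsub, hcol0 0]
    unfold wr
    norm_num
  rw [hdet, hdetL, hdetN]

/-- Iterated derivative of a linear combination. -/
lemma iteratedDeriv_combo {U : Set ℝ} (hU : IsOpen U) {k : ℕ} {H : ℕ → ℝ → ℝ} {a : ℕ → ℝ}
    (hH : ∀ c < k, ContDiffOn ℝ ∞ (H c) U) :
    ∀ (n : ℕ) {x : ℝ}, x ∈ U →
      iteratedDeriv n (fun y => ∑ c ∈ Finset.range k, a c * H c y) x
        = ∑ c ∈ Finset.range k, a c * iteratedDeriv n (H c) x := by
  intro n
  induction n with
  | zero => intro x hx; simp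
  | succ n IH =>
    intro x hx
    have hev : iteratedDeriv n (fun y => ∑ c ∈ Finset.range k, a c * H c y) =ᶠ[nhds x]
        fun y => ∑ c ∈ Finset.range k, a c * iteratedDeriv n (H c) y := by
      filter_upwards [hU.mem_nhds hx] with y hy using IH hy
    have hd : ∀ c ∈ Finset.range k, DifferentiableAt ℝ (iteratedDeriv n (H c)) x := fun c hc =>
      diffAt_iteratedDeriv ((hH c (Finset.mem_range.mp hc)).contDiffAt (hU.mem_nhds hx)) n
    rw [iteratedDeriv_succ, hev.deriv_eq,
      deriv_fun_sum (fun c hc => ((hd c hc).const_mul _))]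
    apply Finset.sum_congr rfl
    intro c hc
    rw [deriv_const_mul _ (hd c hc), ← iteratedDeriv_succ]

/-- Column linearity of the Wronskian in the last column. -/
lemma wr_combo {U : Set ℝ} (hU : IsOpen U) {j : ℕ} {H : ℕ → ℝ → ℝ} {a : ℕ → ℝ}
    (hH : ∀ c < j + 1, ContDiffOn ℝ ∞ (H c) U) {x : ℝ} (hx : x ∈ U) :
    wr (fun i => if i = j then (fun y => ∑ c ∈ Finset.range (j + 1), a c * H c y) else H i)
      (j + 1) x = a j * wr H (j + 1) x := by
  classical
  have hMeq : (Matrix.of fun r c : Fin (j + 1) => iteratedDeriv (r : ℕ)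
        ((fun i => if i = j then (fun y => ∑ c ∈ Finset.range (j + 1), a c * H c y) else H i)
          (c : ℕ)) x) =
      (Matrix.of fun r c : Fin (j + 1) => iteratedDeriv (r : ℕ) (H (c : ℕ)) x).updateCol
        (Fin.last j) (fun r => ∑ c : Fin (j + 1), a (c : ℕ) •
          (Matrix.of fun r c : Fin (j + 1) => iteratedDeriv (r : ℕ) (H (c : ℕ)) x) r c) := by
    ext r c
    rw [Matrix.updateCol_apply]
    simp only [Matrix.of_apply]
    by_cases hc : c = Fin.last j
    · subst hc
      simp only [Fin.val_last, eq_self_iff_true, if_true]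
      rw [iteratedDeriv_combo hU hH (r : ℕ) hx]
      rw [← Fin.sum_univ_eq_sum_range (fun c => a c * iteratedDeriv (r : ℕ) (H c) x) (j + 1)]
      simp [smul_eq_mul]
    · rw [if_neg hc,
        if_neg (show ¬((c : ℕ) = j) from fun hcc => hc (Fin.ext (by simp [Fin.val_last, hcc])))]
  rw [wr, hMeq, Matrix.det_updateCol_sum]
  unfold wr
  simp [Fin.val_last, smul_eq_mul]

/-- The core non-vanishing lemma for Chebyshev-like systems. -/
lemma core : ∀ (n : ℕ) (U : Set ℝ) (h : ℕ → ℝ → ℝ) (x : Fin (n + 1) → ℝ),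
    IsOpen U → U.OrdConnected → StrictMono x → (∀ t, x t ∈ U) →
    (∀ i ≤ n, ContDiffOn ℝ ∞ (h i) U) →
    (∀ i, 1 ≤ i → i ≤ n + 1 → ∀ y ∈ Set.Icc (x 0) (x (Fin.last n)), wr h i y ≠ 0) →
    (∀ t, h n (x t) = 0) → False := by
  intro n
  induction n with
  | zero =>
    intro U h x _ _ _ _ _ hW hz
    have h00 : (Fin.last 0 : Fin 1) = 0 := by decide
    refine hW 1 le_rfl le_rfl (x 0) ?_ (by rw [wr_one]; exact hz 0)
    rw [h00]
    exact Set.mem_Icc.mpr ⟨le_rfl, le_rfl⟩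
  | succ n ih =>
    intro U h x hU hUc hmono hxU hsm hW hz
    have hab : x 0 ≤ x (Fin.last (n + 1)) := hmono.monotone (Fin.zero_le _)
    have hIccU : Set.Icc (x 0) (x (Fin.last (n + 1))) ⊆ U := fun y hy => hUc.out (hxU 0) (hxU _) hy
    have h0ne : ∀ y ∈ Set.Icc (x 0) (x (Fin.last (n + 1))), h 0 y ≠ 0 := fun y hy => by
      have := hW 1 le_rfl (by omega) y hy; rwa [wr_one] at this
    have hVopen : IsOpen (U ∩ (h 0) ⁻¹' {(0:ℝ)}ᶜ) :=
      ((hsm 0 (by omega)).continuousOn).isOpen_inter_preimage hU isOpen_compl_singleton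
    have hIccV : Set.Icc (x 0) (x (Fin.last (n + 1))) ⊆ U ∩ (h 0) ⁻¹' {(0:ℝ)}ᶜ :=
      fun y hy => ⟨hIccU hy, h0ne y hy⟩
    obtain ⟨δ, hδ, hth⟩ := isCompact_Icc.exists_thickening_subset_open hVopen hIccV
    have hVsub : Set.Ioo (x 0 - δ) (x (Fin.last (n + 1)) + δ) ⊆ U ∩ (h 0) ⁻¹' {(0:ℝ)}ᶜ := by
      intro y hy
      apply hth
      rw [Metric.mem_thickening_iff]
      rcases lt_or_ge y (x 0) with h1 | h1
      · exact ⟨x 0, Set.left_mem_Icc.mpr hab, by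
          rw [Real.dist_eq, abs_of_neg (by linarith)]; linarith [hy.1]⟩
      · rcases le_or_gt y (x (Fin.last (n + 1))) with h2 | h2
        · exact ⟨y, ⟨h1, h2⟩, by simpa using hδ⟩
        · exact ⟨x (Fin.last (n + 1)), Set.right_mem_Icc.mpr hab, by
            rw [Real.dist_eq, abs_of_pos (by linarith)]; linarith [hy.2]⟩
    set V := Set.Ioo (x 0 - δ) (x (Fin.last (n + 1)) + δ) with hVdef
    have hVU : V ⊆ U := fun y hy => (hVsub hy).1
    have hV0 : ∀ y ∈ V, h 0 y ≠ 0 := fun y hy => (hVsub hy).2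
    have hVopen' : IsOpen V := isOpen_Ioo
    have hIccVsub : Set.Icc (x 0) (x (Fin.last (n + 1))) ⊆ V := fun y hy =>
      ⟨by linarith [hy.1], by linarith [hy.2]⟩
    have hsmq : ∀ c ≤ n + 1, ContDiffOn ℝ ∞ (qd h c) V := fun c hc =>
      ((hsm c hc).mono hVU).div ((hsm 0 (by omega)).mono hVU) hV0
    have hsmp : ∀ c ≤ n, ContDiffOn ℝ ∞ (pd h c) V := by
      intro c hc
      have := (hsmq (c + 1) (by omega)).deriv_of_isOpen hVopen'
        (le_of_eq (show (∞ : WithTop ℕ∞) + 1 = ∞ from rfl))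
      exact this
    have hroll : ∀ t : Fin (n + 1), ∃ y, y ∈ Set.Ioo (x t.castSucc) (x t.succ) ∧
        deriv (qd h (n + 1)) y = 0 := by
      intro t
      have hlt : x t.castSucc < x t.succ := hmono (Fin.castSucc_lt_succ : t.castSucc < t.succ)
      have hIccsub : Set.Icc (x t.castSucc) (x t.succ) ⊆
          Set.Icc (x 0) (x (Fin.last (n + 1))) :=
        Set.Icc_subset_Icc (hmono.monotone (Fin.zero_le _)) (hmono.monotone (Fin.le_last _))
      have hcont : ContinuousOn (qd h (n + 1)) (Set.Icc (x t.castSucc) (x t.succ)) :=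
        ((hsmq (n + 1) le_rfl).continuousOn).mono (hIccsub.trans hIccVsub)
      have hval : qd h (n + 1) (x t.castSucc) = qd h (n + 1) (x t.succ) := by
        simp [qd, hz t.castSucc, hz t.succ]
      exact exists_deriv_eq_zero hlt hcont hval
    choose y hy1 hy2 using hroll
    have hymono : StrictMono y := by
      intro t t' htt'
      have h1 : y t < x t.succ := (hy1 t).2
      have h2 : x t'.castSucc < y t' := (hy1 t').1
      have h3 : x t.succ ≤ x t'.castSucc := hmono.monotone (by
        rw [Fin.le_def]
        simp only [Fin.val_succ, Fin.coe_castSucc]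
        exact htt')
      linarith
    have hyIcc : ∀ t, y t ∈ Set.Icc (x 0) (x (Fin.last (n + 1))) := fun t =>
      ⟨le_trans (hmono.monotone (Fin.zero_le _)) (hy1 t).1.le,
        le_trans (hy1 t).2.le (hmono.monotone (Fin.le_last _))⟩
    have hyV : ∀ t, y t ∈ V := fun t => hIccVsub (hyIcc t)
    apply ih V (pd h) y hVopen' Set.ordConnected_Ioo hymono hyV hsmp
    · intro i hi1 hi2 z hz'
      have hzIcc : z ∈ Set.Icc (x 0) (x (Fin.last (n + 1))) :=
        ⟨le_trans (hyIcc 0).1 hz'.1, le_trans hz'.2 (hyIcc _).2⟩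
      have hzV : z ∈ V := hIccVsub hzIcc
      obtain ⟨i', rfl⟩ : ∃ i', i = i' + 1 := ⟨i - 1, by omega⟩
      have hfac := wr_factor hVopen' h (i' + 1)
        (fun c hc => (hsm c (by omega)).mono hVU) hV0 hzV
      have hWh := hW (i' + 1 + 1) (by omega) (by omega) z hzIcc
      intro hcontra
      exact hWh (by rw [hfac, hcontra, mul_zero])
    · intro t
      exact hy2 t
  
/-- within-derivatives agree with plain derivatives for functions smooth on a
neighborhood. -/
lemma iteratedDerivWithin_eq_iteratedDeriv_of {I U : Set ℝ} (hIu : UniqueDiffOn ℝ I)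
    (hU : IsOpen U) {H : ℝ → ℝ} (hH : ContDiffOn ℝ ∞ H U) :
    ∀ (n : ℕ) {x : ℝ}, x ∈ I → x ∈ U →
      iteratedDerivWithin n H I x = iteratedDeriv n H x := by
  intro n
  induction n with
  | zero => intro x _ _; simp [iteratedDerivWithin_zero, iteratedDeriv_zero]
  | succ n IH =>
    intro x hxI hxU
    rw [iteratedDerivWithin_succ, iteratedDeriv_succ]
    have hev : iteratedDerivWithin n H I =ᶠ[nhdsWithin x I] iteratedDeriv n H := by
      filter_upwards [nhdsWithin_le_nhds (hU.mem_nhds hxU), self_mem_nhdsWithin]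
        with y hyU hyI
      exact IH hyI hyU
    rw [hev.derivWithin_eq (IH hxI hxU)]
    exact (diffAt_iteratedDeriv (hH.contDiffAt (hU.mem_nhds hxU)) n).derivWithin
      (hIu.uniqueDiffWithinAt hxI)

/-- Bridge: extend an analytic-on-`I` family across the two endpoints of `[c,d] ⊆ I` to a
family smooth on an open interval, with matching within-`I` derivatives on `[c,d]`. -/
lemma bridge {I : Set ℝ} (hIu : UniqueDiffOn ℝ I) (hIc : I.OrdConnected) (k : ℕ)
    (f : ℕ → ℝ → ℝ) (hf : ∀ i < k, AnalyticOn ℝ (f i) I) {c d : ℝ} (hcd : c < d)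
    (hc : c ∈ I) (hd : d ∈ I) :
    ∃ (U : Set ℝ) (H : ℕ → ℝ → ℝ), IsOpen U ∧ U.OrdConnected ∧ Set.Icc c d ⊆ U ∧
      (∀ i < k, ContDiffOn ℝ ∞ (H i) U) ∧
      (∀ i < k, ∀ x ∈ Set.Icc c d, ∀ n : ℕ,
        iteratedDeriv n (H i) x = iteratedDerivWithin n (f i) I x) := by
  classical
  have hIcc : Set.Icc c d ⊆ I := hIc.out hc hd
  have hGet : ∀ (e : ℝ), e ∈ I → ∀ i : ℕ, ∃ g : ℝ → ℝ,
      Set.EqOn (f i) g I ∧ (i < k → AnalyticAt ℝ g e) := by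
    intro e he i
    by_cases hi : i < k
    · obtain ⟨g, _, hg2, hg3⟩ := (hf i hi e he).exists_analyticAt
      exact ⟨g, hg2.mono (Set.subset_insert _ _), fun _ => hg3⟩
    · exact ⟨f i, Set.eqOn_refl _ _, fun h => absurd h hi⟩
  choose gL hgLeq hgLa using hGet c hc
  choose gR hgReq hgRa using hGet d hd
  have hOL : IsOpen (⋂ i ∈ Finset.range k, {y | AnalyticAt ℝ (gL i) y}) :=
    isOpen_biInter_finset (fun i _ => isOpen_analyticAt ℝ (gL i))
  have hOR : IsOpen (⋂ i ∈ Finset.range k, {y | AnalyticAt ℝ (gR i) y}) :=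
    isOpen_biInter_finset (fun i _ => isOpen_analyticAt ℝ (gR i))
  have hcOL : c ∈ ⋂ i ∈ Finset.range k, {y | AnalyticAt ℝ (gL i) y} := by
    simp only [Set.mem_iInter]
    exact fun i hi => hgLa i (Finset.mem_range.mp hi)
  have hdOR : d ∈ ⋂ i ∈ Finset.range k, {y | AnalyticAt ℝ (gR i) y} := by
    simp only [Set.mem_iInter]
    exact fun i hi => hgRa i (Finset.mem_range.mp hi)
  obtain ⟨εL, hεL, hballL⟩ := Metric.isOpen_iff.mp hOL c hcOL
  obtain ⟨εR, hεR, hballR⟩ := Metric.isOpen_iff.mp hOR d hdOR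
  set δ := min (min εL εR) ((d - c) / 2) with hδdef
  have hδ : 0 < δ := lt_min (lt_min hεL hεR) (by linarith)
  have hδL : δ ≤ εL := le_trans (min_le_left _ _) (min_le_left _ _)
  have hδR : δ ≤ εR := le_trans (min_le_left _ _) (min_le_right _ _)
  have hδcd : δ ≤ (d - c) / 2 := min_le_right _ _
  set H : ℕ → ℝ → ℝ := fun i y => if y < (c + d) / 2 then gL i y else gR i y with hHdef
  set U := Set.Ioo (c - δ) (d + δ) with hUdef
  have hUopen : IsOpen U := isOpen_Ioo
  have hIccU : Set.Icc c d ⊆ U := fun y hy => ⟨by linarith [hy.1], by linarith [hy.2]⟩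
  have hHfI : ∀ i, Set.EqOn (H i) (f i) I := by
    intro i y hy
    by_cases hym : y < (c + d) / 2
    · simp only [H, if_pos hym]; exact (hgLeq i hy).symm
    · simp only [H, if_neg hym]; exact (hgReq i hy).symm
  have hIooint : Set.Ioo c d ⊆ interior I :=
    interior_maximal (fun y hy => hIcc (Set.Ioo_subset_Icc_self hy)) isOpen_Ioo
  have hsmooth : ∀ i < k, ContDiffOn ℝ ∞ (H i) U := by
    intro i hi x hx
    apply ContDiffAt.contDiffWithinAt
    rcases le_or_gt x c with hxc | hxc
    · have hxball : x ∈ Metric.ball c δ := by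
        rw [Metric.mem_ball, Real.dist_eq, abs_lt]
        constructor <;> [linarith [hx.1]; linarith]
      have hga : AnalyticAt ℝ (gL i) x := by
        have := hballL (Metric.ball_subset_ball hδL hxball)
        simp only [Set.mem_iInter] at this
        exact this i (Finset.mem_range.mpr hi)
      apply hga.contDiffAt.congr_of_eventuallyEq
      filter_upwards [Metric.isOpen_ball.mem_nhds hxball] with y hy
      have : y < (c + d) / 2 := by
        rw [Metric.mem_ball, Real.dist_eq, abs_lt] at hy
        have : y < c + δ := by linarith [hy.2]
        linarith
      simp only [H, if_pos this]
    · rcases lt_or_ge x d with hxd | hxd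
      · have hxint : x ∈ interior I := hIooint ⟨hxc, hxd⟩
        have hfa : AnalyticAt ℝ (f i) x := by
          obtain ⟨g, _, hg2, hg3⟩ := (hf i hi x (interior_subset hxint)).exists_analyticAt
          apply hg3.congr
          filter_upwards [mem_interior_iff_mem_nhds.mp hxint] with y hy
          exact (hg2 (Set.subset_insert _ _ hy)).symm
        apply hfa.contDiffAt.congr_of_eventuallyEq
        filter_upwards [mem_interior_iff_mem_nhds.mp hxint] with y hy
        exact hHfI i hy
      · have hxball : x ∈ Metric.ball d δ := by
          rw [Metric.mem_ball, Real.dist_eq, abs_lt]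
          constructor <;> [linarith; linarith [hx.2]]
        have hga : AnalyticAt ℝ (gR i) x := by
          have := hballR (Metric.ball_subset_ball hδR hxball)
          simp only [Set.mem_iInter] at this
          exact this i (Finset.mem_range.mpr hi)
        apply hga.contDiffAt.congr_of_eventuallyEq
        filter_upwards [Metric.isOpen_ball.mem_nhds hxball] with y hy
        have : ¬ y < (c + d) / 2 := by
          rw [Metric.mem_ball, Real.dist_eq, abs_lt] at hy
          push_neg
          have : d - δ < y := by linarith [hy.1]
          linarith
        simp only [H, if_neg this]
  refine ⟨U, H, hUopen, Set.ordConnected_Ioo, hIccU, hsmooth, ?_⟩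
  intro i hi x hx n
  have h1 : iteratedDeriv n (H i) x = iteratedDerivWithin n (H i) I x :=
    (iteratedDerivWithin_eq_iteratedDeriv_of hIu hUopen (hsmooth i hi) n (hIcc hx)
      (hIccU hx)).symm
  rw [h1]
  exact iteratedDerivWithin_congr (hHfI i) (hIcc hx)

end StmtAux

/-- If `f 0, …, f (k-1)` are analytic on an interval `I` and each Wronskian
`W(f 0, …, f (i-1))`, `1 ≤ i ≤ k`, has finitely many zeros in `I`, then for any
constants not all zero, the number of distinct zeros of the linear combination satisfies
`Z(a_1 f_1 + … + a_k f_k) ≤ (1 + Σ_{i=1}^k Z(W(f_1,…,f_i))) * k - 1`. -/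
theorem stmt1 (k : ℕ) (hk : 1 ≤ k) (I : Set ℝ) (hI : I.OrdConnected) (hI' : I.Nontrivial)
    (f : ℕ → ℝ → ℝ) (hf : ∀ i < k, AnalyticOn ℝ (f i) I)
    (hWfin : ∀ i, 1 ≤ i → i ≤ k → {x ∈ I | wronskianOn I f i x = 0}.Finite)
    (a : ℕ → ℝ) (ha : ∃ i < k, a i ≠ 0) :
    {x ∈ I | (∑ i ∈ Finset.range k, a i * f i x) = 0}.Finite ∧
      {x ∈ I | (∑ i ∈ Finset.range k, a i * f i x) = 0}.ncard ≤
        (1 + ∑ i ∈ Finset.Icc 1 k, {x ∈ I | wronskianOn I f i x = 0}.ncard) * k - 1 := by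
  classical
  -- basic structure of `I`
  obtain ⟨p, hpI, q, hqI, hpq⟩ := hI'
  have hconv : Convex ℝ I := hI.convex
  have hne : (interior I).Nonempty := by
    rcases lt_or_gt_of_ne hpq with hlt | hlt
    · exact ⟨(p + q) / 2, interior_maximal
        (fun y hy => hI.out hpI hqI (Set.Ioo_subset_Icc_self hy)) isOpen_Ioo
        ⟨by linarith, by linarith⟩⟩
    · exact ⟨(q + p) / 2, interior_maximal
        (fun y hy => hI.out hqI hpI (Set.Ioo_subset_Icc_self hy)) isOpen_Ioo
        ⟨by linarith, by linarith⟩⟩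
  have hIu : UniqueDiffOn ℝ I := uniqueDiffOn_convex hconv hne
  -- the largest nonzero coefficient
  have hT0ne : ((Finset.range k).filter (fun i => a i ≠ 0)).Nonempty := by
    obtain ⟨i, hik, hai⟩ := ha
    exact ⟨i, Finset.mem_filter.mpr ⟨Finset.mem_range.mpr hik, hai⟩⟩
  obtain ⟨j, hjdef⟩ : ∃ j, j = ((Finset.range k).filter (fun i => a i ≠ 0)).max' hT0ne :=
    ⟨_, rfl⟩
  have hjmem := ((Finset.range k).filter (fun i => a i ≠ 0)).max'_mem hT0ne
  rw [← hjdef] at hjmem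
  have hjk : j < k := Finset.mem_range.mp (Finset.mem_filter.mp hjmem).1
  have haj : a j ≠ 0 := (Finset.mem_filter.mp hjmem).2
  have hmax : ∀ i, j < i → i < k → a i = 0 := by
    intro i hji hik
    by_contra hai
    have := ((Finset.range k).filter (fun i => a i ≠ 0)).le_max' i
      (Finset.mem_filter.mpr ⟨Finset.mem_range.mpr hik, hai⟩)
    rw [← hjdef] at this
    omega
  have hg1 : ∀ x : ℝ, (∑ i ∈ Finset.range k, a i * f i x) =
      ∑ i ∈ Finset.range (j + 1), a i * f i x := by
    intro x
    refine (Finset.sum_subset (Finset.range_subset_range.mpr hjk) ?_).symm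
    intro i hik hij
    have h1 : ¬ i < j + 1 := fun hcon => hij (Finset.mem_range.mpr hcon)
    rw [hmax i (by omega) (Finset.mem_range.mp hik), zero_mul]
  -- the finite set of Wronskian zeros
  obtain ⟨SF, hSFdef⟩ : ∃ SF : Finset ℝ, SF = (Finset.Icc 1 k).biUnion
      (fun i => if h : 1 ≤ i ∧ i ≤ k then (hWfin i h.1 h.2).toFinset else ∅) := ⟨_, rfl⟩
  have hSFmem : ∀ y i, 1 ≤ i → i ≤ k → y ∈ I → wronskianOn I f i y = 0 → y ∈ SF := by
    intro y i h1 h2 hyI hy0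
    rw [hSFdef]
    refine Finset.mem_biUnion.mpr ⟨i, Finset.mem_Icc.mpr ⟨h1, h2⟩, ?_⟩
    rw [dif_pos (⟨h1, h2⟩ : 1 ≤ i ∧ i ≤ k), Set.Finite.mem_toFinset]
    exact ⟨hyI, hy0⟩
  -- KEY: any j+1 zeros of the combination sandwich a Wronskian zero
  have key : ∀ x : Fin (j + 1) → ℝ, StrictMono x →
      (∀ t, x t ∈ I ∧ (∑ i ∈ Finset.range k, a i * f i (x t)) = 0) →
      ∃ s ∈ SF, x 0 ≤ s ∧ s ≤ x (Fin.last j) := by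
    intro x hmono hmem
    by_contra hcon
    push_neg at hcon
    have hIccI : Set.Icc (x 0) (x (Fin.last j)) ⊆ I :=
      hI.out (hmem 0).1 (hmem (Fin.last j)).1
    have hWne : ∀ i, 1 ≤ i → i ≤ k →
        ∀ y ∈ Set.Icc (x 0) (x (Fin.last j)), wronskianOn I f i y ≠ 0 := by
      intro i h1 h2 y hy h0
      exact absurd hy.2 (not_le.mpr (hcon y (hSFmem y i h1 h2 (hIccI hy) h0) hy.1))
    by_cases hj0 : j = 0
    · subst hj0
      have hlast : (Fin.last 0 : Fin 1) = 0 := by decide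
      have h1 := hWne 1 le_rfl hk (x 0) ⟨le_rfl, le_of_eq (by rw [hlast])⟩
      rw [StmtAux.wronskianOn_one] at h1
      have h2 : (∑ i ∈ Finset.range k, a i * f i (x 0)) = a 0 * f 0 (x 0) := by
        rw [hg1]; simp
      have h3 := (hmem 0).2
      rw [h2] at h3
      rcases mul_eq_zero.mp h3 with h | h
      · exact haj h
      · exact h1 h
    · have hj1 : 1 ≤ j := Nat.one_le_iff_ne_zero.mpr hj0
      have h0last : (0 : Fin (j + 1)) < Fin.last j := by
        rw [Fin.lt_def]
        simp only [Fin.val_last, Fin.val_zero]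
        omega
      have hcd : x 0 < x (Fin.last j) := hmono h0last
      obtain ⟨U, H, hUopen, hUoc, hIccU, hHsm, hHder⟩ :=
        StmtAux.bridge hIu hI k f hf hcd (hmem 0).1 (hmem (Fin.last j)).1
      have hxIcc : ∀ t : Fin (j + 1), x t ∈ Set.Icc (x 0) (x (Fin.last j)) :=
        fun t => ⟨hmono.monotone (Fin.zero_le t), hmono.monotone (Fin.le_last t)⟩
      have hwrH : ∀ i, i ≤ j + 1 → ∀ y ∈ Set.Icc (x 0) (x (Fin.last j)),
          StmtAux.wr H i y = wronskianOn I f i y := by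
        intro i hik y hy
        unfold StmtAux.wr wronskianOn
        congr 1
        ext r c
        simp only [Matrix.of_apply]
        exact hHder c (lt_of_lt_of_le c.isLt (hik.trans (by omega))) y hy r
      refine StmtAux.core j U
        (fun i => if i = j then (fun y => ∑ c ∈ Finset.range (j + 1), a c * H c y) else H i)
        x hUopen hUoc hmono (fun t => hIccU (hxIcc t)) ?_ ?_ ?_
      · -- smoothness
        intro i hij
        show ContDiffOn ℝ ∞
          (if i = j then (fun y => ∑ c ∈ Finset.range (j + 1), a c * H c y) else H i) U
        by_cases hii : i = j
        · rw [if_pos hii]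
          exact ContDiffOn.sum (fun c hc =>
            contDiffOn_const.mul (hHsm c (by
              have := Finset.mem_range.mp hc; omega)))
        · rw [if_neg hii]
          exact hHsm i (by omega)
      · -- nonvanishing Wronskians
        intro i hi1 hi2 z hzIcc
        by_cases hii : i = j + 1
        · subst hii
          rw [StmtAux.wr_combo hUopen (fun c hc => hHsm c (by omega)) (hIccU hzIcc)]
          rw [hwrH (j + 1) le_rfl z hzIcc]
          exact mul_ne_zero haj (hWne (j + 1) (by omega) (by omega) z hzIcc)
        · rw [StmtAux.wr_congr i z (fun c hc => if_neg (show ¬ (c = j) by omega))]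
          rw [hwrH i (by omega) z hzIcc]
          exact hWne i hi1 (by omega) z hzIcc
      · -- zeros
        intro t
        show (if j = j then (fun y => ∑ c ∈ Finset.range (j + 1), a c * H c y) else H j)
          (x t) = 0
        rw [if_pos rfl]
        show (∑ c ∈ Finset.range (j + 1), a c * H c (x t)) = 0
        have hHval : ∀ c, c < j + 1 → H c (x t) = f c (x t) := by
          intro c hc
          have := hHder c (by omega) (x t) (hxIcc t) 0
          simpa [iteratedDeriv_zero, iteratedDerivWithin_zero] using this
        rw [Finset.sum_congr rfl (fun c hc => by
          rw [hHval c (Finset.mem_range.mp hc)])]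
        rw [← hg1 (x t)]
        exact (hmem t).2
  -- the cardinality bound for finite subsets of the zero set
  obtain ⟨B, hB⟩ : ∃ B, B = (SF.card + 1) * (j + 1) := ⟨_, rfl⟩
  have claim : ∀ T : Finset ℝ,
      ↑T ⊆ {x ∈ I | (∑ i ∈ Finset.range k, a i * f i x) = 0} → T.card ≤ B - 1 := by
    intro T hT
    by_contra hcon'
    have hn : (SF.card + 1) * (j + 1) ≤ T.card := by
      rw [← hB]; omega
    have hidx : ∀ (b : Fin (SF.card + 1)) (t : Fin (j + 1)),
        (b : ℕ) * (j + 1) + (t : ℕ) < T.card := by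
      intro b t
      have h1 : ((b : ℕ) + 1) * (j + 1) ≤ (SF.card + 1) * (j + 1) :=
        Nat.mul_le_mul_right _ (by omega)
      have h2 : ((b : ℕ) + 1) * (j + 1) = (b : ℕ) * (j + 1) + (j + 1) := by ring
      have h3 := t.isLt
      omega
    have hmemT : ∀ (b : Fin (SF.card + 1)) (t : Fin (j + 1)),
        T.orderEmbOfFin rfl ⟨(b : ℕ) * (j + 1) + (t : ℕ), hidx b t⟩ ∈
          {x ∈ I | (∑ i ∈ Finset.range k, a i * f i x) = 0} :=
      fun b t => hT (Finset.mem_coe.mpr (Finset.orderEmbOfFin_mem T rfl _))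
    have hkb : ∀ b : Fin (SF.card + 1), ∃ s, s ∈ SF ∧
        (fun t : Fin (j + 1) =>
          T.orderEmbOfFin rfl ⟨(b : ℕ) * (j + 1) + (t : ℕ), hidx b t⟩) 0 ≤ s ∧
        s ≤ (fun t : Fin (j + 1) =>
          T.orderEmbOfFin rfl ⟨(b : ℕ) * (j + 1) + (t : ℕ), hidx b t⟩) (Fin.last j) := by
      intro b
      obtain ⟨s, hs1, hs2⟩ := key
        (fun t : Fin (j + 1) =>
          T.orderEmbOfFin rfl ⟨(b : ℕ) * (j + 1) + (t : ℕ), hidx b t⟩)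
        (fun t t' htt' => (T.orderEmbOfFin rfl).strictMono (by
          rw [Fin.mk_lt_mk]
          exact Nat.add_lt_add_left htt' _))
        (fun t => (hmemT b t : _))
      exact ⟨s, hs1, hs2⟩
    choose φ hφSF hφbnd using hkb
    have hφmono : StrictMono φ := by
      intro b b' hbb'
      have h1 := (hφbnd b).2
      have h2 := (hφbnd b').1
      simp only at h1 h2
      have hlt : ((⟨(b : ℕ) * (j + 1) + ((Fin.last j : Fin (j + 1)) : ℕ), hidx b _⟩ : Fin T.card)) <
          ⟨(b' : ℕ) * (j + 1) + ((0 : Fin (j + 1)) : ℕ), hidx b' 0⟩ := by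
        rw [Fin.mk_lt_mk]
        have hb1 : ((b : ℕ) + 1) * (j + 1) ≤ (b' : ℕ) * (j + 1) :=
          Nat.mul_le_mul_right _ (by exact_mod_cast hbb')
        have hb2 : ((b : ℕ) + 1) * (j + 1) = (b : ℕ) * (j + 1) + (j + 1) := by ring
        simp only [Fin.val_last, Fin.val_zero]
        omega
      have h3 := (T.orderEmbOfFin rfl).strictMono hlt
      calc φ b ≤ _ := h1
        _ < _ := h3
        _ ≤ φ b' := h2
    have hcard := Finset.card_le_card_of_injOn (s := (Finset.univ : Finset (Fin (SF.card + 1))))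
      (t := SF) φ (fun b _ => hφSF b) (hφmono.injective.injOn)
    rw [Finset.card_univ, Fintype.card_fin] at hcard
    omega
  -- conclude
  have hBpos : 1 ≤ B := by
    rw [hB]
    exact Nat.one_le_iff_ne_zero.mpr (Nat.mul_ne_zero (by omega) (by omega))
  have hZfin : {x ∈ I | (∑ i ∈ Finset.range k, a i * f i x) = 0}.Finite := by
    by_contra hinf
    obtain ⟨T, hTsub, hTcard⟩ := Set.Infinite.exists_subset_card_eq hinf B
    have := claim T hTsub
    omega
  refine ⟨hZfin, ?_⟩
  have h1 : {x ∈ I | (∑ i ∈ Finset.range k, a i * f i x) = 0}.ncard = hZfin.toFinset.card :=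
    Set.ncard_eq_toFinset_card _ hZfin
  have h2 := claim hZfin.toFinset (by rw [Set.Finite.coe_toFinset])
  have hSFcard : SF.card ≤ ∑ i ∈ Finset.Icc 1 k, {x ∈ I | wronskianOn I f i x = 0}.ncard := by
    rw [hSFdef]
    refine le_trans (Finset.card_biUnion_le) (Finset.sum_le_sum ?_)
    intro i hi
    rcases Finset.mem_Icc.mp hi with ⟨hi1, hi2⟩
    rw [dif_pos (⟨hi1, hi2⟩ : 1 ≤ i ∧ i ≤ k)]
    rw [Set.ncard_eq_toFinset_card _ (hWfin i hi1 hi2)]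
  have hfin : B ≤ (1 + ∑ i ∈ Finset.Icc 1 k, {x ∈ I | wronskianOn I f i x = 0}.ncard) * k := by
    rw [hB]
    exact Nat.mul_le_mul (by omega) (by omega)
  calc {x ∈ I | (∑ i ∈ Finset.range k, a i * f i x) = 0}.ncard
      = hZfin.toFinset.card := h1
    _ ≤ B - 1 := h2
    _ ≤ (1 + ∑ i ∈ Finset.Icc 1 k, {x ∈ I | wronskianOn I f i x = 0}.ncard) * k - 1 :=
        Nat.sub_le_sub_right hfin 1
end

section
/- Let f_1, …, f_k be real analytic functions on a real interval I, write W_j = W(f_1, …, f_j) for 1 ≤ j ≤ k and W_0 = 1, and define recursively R_0 = f_1 + … + f_k and R_{i+1} = (W_{i+1}² / W_i) · (R_i / W_{i+1})′. Then on any subinterval of I on which W_1, …, W_{k−1} are all nonvanishing, each R_i (0 ≤ i ≤ k−1) is well-defined and analytic, and R_{k−1} = W_k. -/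
/-- The sequence of Frobenius, defined by `R 0 = f 1 + … + f k` and
`R (i+1) = (W_{i+1}² / W_i) · (R i / W_{i+1})′`, with derivatives taken within `I`. -/
noncomputable def frobR (I : Set ℝ) (f : ℕ → ℝ → ℝ) (k : ℕ) : ℕ → ℝ → ℝ
  | 0 => fun x => ∑ i ∈ Finset.range k, f i x
  | (i + 1) => fun x =>
      (wronskianOn I f (i + 1) x) ^ 2 / wronskianOn I f i x *
        derivWithin (fun y => frobR I f k i y / wronskianOn I f (i + 1) y) I x

open Set Matrix

lemma myUDO {s : Set ℝ} (hs : s.OrdConnected) (hs' : s.Nontrivial) : UniqueDiffOn ℝ s := by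
  obtain ⟨a, ha, b, hb, hab⟩ := hs'
  rcases hab.lt_or_gt with h | h
  · refine uniqueDiffOn_convex hs.convex ⟨(a + b) / 2, ?_⟩
    have : Ioo a b ⊆ interior s :=
      (IsOpen.subset_interior_iff isOpen_Ioo).2 fun x hx => hs.out ha hb ⟨hx.1.le, hx.2.le⟩
    exact this ⟨by linarith, by linarith⟩
  · refine uniqueDiffOn_convex hs.convex ⟨(b + a) / 2, ?_⟩
    have : Ioo b a ⊆ interior s :=
      (IsOpen.subset_interior_iff isOpen_Ioo).2 fun x hx => hs.out hb ha ⟨hx.1.le, hx.2.le⟩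
    exact this ⟨by linarith, by linarith⟩

lemma myderivWithin {g : ℝ → ℝ} {s : Set ℝ} (h : AnalyticOn ℝ g s) (hu : UniqueDiffOn ℝ s) :
    AnalyticOn ℝ (derivWithin g s) s := by
  have h1 := (ContinuousLinearMap.apply ℝ ℝ (1:ℝ)).comp_analyticOn (h.fderivWithin hu)
  exact h1.congr fun x hx => rfl

lemma myIter {g : ℝ → ℝ} {s : Set ℝ} (h : AnalyticOn ℝ g s) (hu : UniqueDiffOn ℝ s) (n : ℕ) :
    AnalyticOn ℝ (iteratedDerivWithin n g s) s := by
  induction n with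
  | zero => exact h.congr fun x hx => congrFun iteratedDerivWithin_zero x
  | succ n ih => exact (myderivWithin ih hu).congr fun x hx =>
      (congrFun iteratedDerivWithin_succ x)
open Set Matrix Finset

lemma hasDerivWithinAt_det_col {m : ℕ} {s : Set ℝ} {x : ℝ}
    (A : ℝ → Matrix (Fin m) (Fin m) ℝ) (B : Matrix (Fin m) (Fin m) ℝ)
    (h : ∀ r c, HasDerivWithinAt (fun y => A y r c) (B r c) s x) :
    HasDerivWithinAt (fun y => (A y).det)
      (∑ c, ((A x).updateCol c (fun r => B r c)).det) s x := by
  have key : ∀ y, (A y).det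
      = ∑ σ : Equiv.Perm (Fin m), ((Equiv.Perm.sign σ : ℤ) : ℝ) * ∏ i, A y (σ i) i := by
    intro y
    rw [Matrix.det_apply]
    congr 1; ext σ
    rw [Units.smul_def, zsmul_eq_mul]
  have hd : HasDerivWithinAt
      (fun y => ∑ σ : Equiv.Perm (Fin m), ((Equiv.Perm.sign σ : ℤ) : ℝ) * ∏ i, A y (σ i) i)
      (∑ σ : Equiv.Perm (Fin m), ((Equiv.Perm.sign σ : ℤ) : ℝ) *
        ∑ i, (∏ j ∈ Finset.univ.erase i, A x (σ j) j) * B (σ i) i) s x := by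
    refine HasDerivWithinAt.fun_sum fun σ _ => ?_
    have := (HasDerivWithinAt.finset_prod (u := Finset.univ)
      (f := fun i y => A y (σ i) i) (f' := fun i => B (σ i) i)
      (fun i _ => h (σ i) i)).const_mul (((Equiv.Perm.sign σ : ℤ) : ℝ))
    simpa [smul_eq_mul] using this
  have : (∑ σ : Equiv.Perm (Fin m), ((Equiv.Perm.sign σ : ℤ) : ℝ) *
        ∑ i, (∏ j ∈ Finset.univ.erase i, A x (σ j) j) * B (σ i) i)
      = ∑ c, ((A x).updateCol c (fun r => B r c)).det := by
    have : ∀ c, ((A x).updateCol c (fun r => B r c)).det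
        = ∑ σ : Equiv.Perm (Fin m), ((Equiv.Perm.sign σ : ℤ) : ℝ) *
          ((∏ j ∈ Finset.univ.erase c, A x (σ j) j) * B (σ c) c) := by
      intro c
      rw [Matrix.det_apply]
      congr 1; ext σ
      rw [Units.smul_def, zsmul_eq_mul]
      congr 1
      rw [← Finset.mul_prod_erase Finset.univ _ (Finset.mem_univ c), mul_comm]
      congr 1
      · exact Finset.prod_congr rfl fun j hj =>
          Matrix.updateCol_ne (Finset.ne_of_mem_erase hj)
      · exact Matrix.updateCol_self ..
    rw [Finset.sum_congr rfl fun c _ => this c, Finset.sum_comm]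
    congr 1; ext σ
    rw [Finset.mul_sum]
  rw [← this]
  exact hd.congr (fun y _ => key y) (key x)

lemma hasDerivWithinAt_det_row {m : ℕ} {s : Set ℝ} {x : ℝ}
    (A : ℝ → Matrix (Fin m) (Fin m) ℝ) (B : Matrix (Fin m) (Fin m) ℝ)
    (h : ∀ r c, HasDerivWithinAt (fun y => A y r c) (B r c) s x) :
    HasDerivWithinAt (fun y => (A y).det)
      (∑ r, ((A x).updateRow r (B r)).det) s x := by
  have := hasDerivWithinAt_det_col (fun y => (A y)ᵀ) Bᵀ (fun r c => h c r)
  simp only [Matrix.det_transpose] at this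
  convert this using 2 with r
  rw [← Matrix.det_transpose, ← Matrix.updateCol_transpose]
  rfl
open Set Matrix Finset

def rowBump (n : ℕ) (r : Fin (n+1)) : Fin (n+2) :=
  if r = Fin.last n then Fin.last (n+1) else r.castSucc

lemma rowBump_last (n : ℕ) : rowBump n (Fin.last n) = Fin.last (n+1) := if_pos rfl

lemma rowBump_castSucc (n : ℕ) (r : Fin n) :
    rowBump n r.castSucc = r.castSucc.castSucc :=
  if_neg (Fin.castSucc_lt_last r).ne

lemma det_updateCol_single {m : ℕ} (C : Matrix (Fin (m+1)) (Fin (m+1)) ℝ)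
    (g : Fin (m+1) → ℝ) (hg : ∀ r, g r = if r = Fin.last m then 1 else 0) :
    (C.updateCol (Fin.last m) g).det
      = (Matrix.of fun r c : Fin m => C r.castSucc c.castSucc).det := by
  rw [Matrix.det_succ_column _ (Fin.last m)]
  rw [Finset.sum_eq_single (Fin.last m)]
  · have h1 : (C.updateCol (Fin.last m) g) (Fin.last m) (Fin.last m) = 1 := by
      rw [Matrix.updateCol_self, hg, if_pos rfl]
    have hsign : ((-1:ℝ))^(((Fin.last m : ℕ)) + ((Fin.last m : ℕ))) = 1 := by
      rw [← two_mul, pow_mul]; norm_num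
    rw [h1, hsign, one_mul, one_mul]
    congr 1
    ext r c
    simp only [Matrix.submatrix_apply, Fin.succAbove_last, Matrix.of_apply]
    rw [Matrix.updateCol_ne (Fin.castSucc_lt_last c).ne]
  · intro i _ hi
    have : (C.updateCol (Fin.last m) g) i (Fin.last m) = 0 := by
      rw [Matrix.updateCol_self, hg, if_neg hi]
    rw [this]; ring
  · intro h; exact absurd (Finset.mem_univ _) h

lemma frobKey {n : ℕ} (M : Matrix (Fin (n+2)) (Fin (n+1)) ℝ) (u : Fin (n+2) → ℝ)
    (htop : (Matrix.of fun r c : Fin (n+1) => M r.castSucc c).det ≠ 0) :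
    (Matrix.of fun r c : Fin (n+1) => M r.castSucc c).det *
        ((Matrix.of fun r c : Fin (n+1) => M (rowBump n r) c).updateCol (Fin.last n)
          (fun r => u (rowBump n r))).det -
      (Matrix.of fun r c : Fin (n+1) => M (rowBump n r) c).det *
        ((Matrix.of fun r c : Fin (n+1) => M r.castSucc c).updateCol (Fin.last n)
          (fun r => u r.castSucc)).det =
    (Matrix.of fun r c : Fin n => M r.castSucc.castSucc c.castSucc).det *
      ((Matrix.of fun r c : Fin (n+2) =>
          (Fin.snoc (M r) (((Pi.single (Fin.last (n+1)) (1:ℝ) : Fin (n+2) → ℝ) r)) : Fin (n+2) → ℝ) c).updateCol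
        (Fin.last (n+1)) u).det := by
  set T : Matrix (Fin (n+1)) (Fin (n+1)) ℝ := Matrix.of fun r c => M r.castSucc c with hT
  set Bo : Matrix (Fin (n+1)) (Fin (n+1)) ℝ := Matrix.of fun r c => M (rowBump n r) c with hBo
  set Q : Matrix (Fin (n+2)) (Fin (n+2)) ℝ :=
    Matrix.of fun r c => (Fin.snoc (M r) (((Pi.single (Fin.last (n+1)) (1:ℝ) : Fin (n+2) → ℝ) r)) : Fin (n+2) → ℝ) c with hQ
  set Ws : ℝ := (Matrix.of fun r c : Fin n => M r.castSucc.castSucc c.castSucc).det with hWs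
  set φf : (Fin (n+2) → ℝ) → ℝ := fun v =>
    T.det * ((Bo.updateCol (Fin.last n) (fun r => v (rowBump n r))).det)
      - Bo.det * ((T.updateCol (Fin.last n) (fun r => v r.castSucc)).det)
      - Ws * ((Q.updateCol (Fin.last (n+1)) v).det) with hφf
  -- `Q`'s last column is the last standard basis vector
  have hQlast : ∀ r, Q r (Fin.last (n+1)) = ((Pi.single (Fin.last (n+1)) (1:ℝ) : Fin (n+2) → ℝ) r) := by
    intro r; simp [hQ, Fin.snoc_last]
  have hQcast : ∀ r (c : Fin (n+1)), Q r c.castSucc = M r c := by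
    intro r c; simp [hQ, Fin.snoc_castSucc]
  -- determinant of Q
  have hQdet : Q.det = T.det := by
    rw [← Matrix.updateCol_eq_self Q (Fin.last (n+1)),
      det_updateCol_single _ _ (fun r => by
        rw [hQlast]
        rcases eq_or_ne r (Fin.last (n+1)) with h | h
        · subst h; rw [if_pos rfl, Pi.single_eq_same]
        · rw [if_neg h, Pi.single_eq_of_ne h])]
    congr 1; ext r c
    simp only [Matrix.of_apply]
    rw [hQcast]
    rfl
  -- linearity of φf
  have hadd : ∀ v w, φf (v + w) = φf v + φf w := by
    intro v w
    have e1 : (fun r => (v + w) (rowBump n r))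
        = (fun r => v (rowBump n r)) + (fun r => w (rowBump n r)) := rfl
    have e2 : (fun r => (v + w) (r.castSucc : Fin (n+2)))
        = (fun r : Fin (n+1) => v r.castSucc) + (fun r : Fin (n+1) => w r.castSucc) := rfl
    simp only [hφf, e1, e2, Matrix.det_updateCol_add]
    ring
  have hsmul : ∀ (a : ℝ) v, φf (a • v) = a * φf v := by
    intro a v
    have e1 : (fun r => (a • v) (rowBump n r)) = a • (fun r => v (rowBump n r)) := rfl
    have e2 : (fun r => (a • v) (r.castSucc : Fin (n+2)))
        = a • (fun r : Fin (n+1) => v r.castSucc) := rfl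
    have e3 : a • v = a • v := rfl
    simp only [hφf, e1, e2, Matrix.det_updateCol_smul]
    ring
  -- φf vanishes on the columns of Q
  have hcol : ∀ c : Fin (n+2), φf (fun r => Q r c) = 0 := by
    intro c
    refine Fin.lastCases ?_ (fun c₀ => ?_) c
    · -- c = last : the standard basis vector
      have hv : ∀ r : Fin (n+2), Q r (Fin.last (n+1)) = if r = Fin.last (n+1) then 1 else 0 := by
        intro r; rw [hQlast]
        rcases eq_or_ne r (Fin.last (n+1)) with h | h
        · subst h; rw [if_pos rfl, Pi.single_eq_same]
        · rw [if_neg h, Pi.single_eq_of_ne h]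
      have h1 : ((Bo.updateCol (Fin.last n) (fun r => Q (rowBump n r) (Fin.last (n+1)))).det)
          = Ws := by
        rw [det_updateCol_single _ _ (fun r => by
          rw [hv]
          by_cases h : r = Fin.last n
          · rw [h, rowBump_last, if_pos rfl, if_pos rfl]
          · have : rowBump n r ≠ Fin.last (n+1) := by
              rw [rowBump]; rw [if_neg h]; exact (Fin.castSucc_lt_last r).ne
            rw [if_neg this, if_neg h])]
        rw [hWs]
        congr 1; ext r c
        simp only [Matrix.of_apply, hBo, rowBump_castSucc]
      have h2 : ((T.updateCol (Fin.last n)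
          (fun r : Fin (n+1) => Q r.castSucc (Fin.last (n+1)))).det) = 0 := by
        apply Matrix.det_eq_zero_of_column_eq_zero (Fin.last n)
        intro i
        rw [Matrix.updateCol_self, hv, if_neg (Fin.castSucc_lt_last i).ne]
      have h3 : ((Q.updateCol (Fin.last (n+1)) (fun r => Q r (Fin.last (n+1)))).det)
          = T.det := by
        rw [Matrix.updateCol_eq_self, hQdet]
      simp only [hφf, h1, h2, h3]
      ring
    · -- c = c₀.castSucc : a column of M
      have hcolM : ∀ r, Q r c₀.castSucc = M r c₀ := fun r => hQcast r c₀
      refine Fin.lastCases ?_ (fun c₁ => ?_) c₀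
      · -- c₀ = last n : last column of M
        have h1 : (Bo.updateCol (Fin.last n)
            (fun r => Q (rowBump n r) (Fin.last n).castSucc)).det = Bo.det := by
          have : (fun r : Fin (n+1) => Q (rowBump n r) (Fin.last n).castSucc)
              = fun r => Bo r (Fin.last n) := by
            funext r; rw [hQcast]; rfl
          rw [this, Matrix.updateCol_eq_self]
        have h2 : (T.updateCol (Fin.last n)
            (fun r : Fin (n+1) => Q r.castSucc (Fin.last n).castSucc)).det = T.det := by
          have : (fun r : Fin (n+1) => Q r.castSucc (Fin.last n).castSucc)
              = fun r => T r (Fin.last n) := by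
            funext r; rw [hQcast]; rfl
          rw [this, Matrix.updateCol_eq_self]
        have h3 : (Q.updateCol (Fin.last (n+1)) (fun r => Q r (Fin.last n).castSucc)).det
            = 0 := by
          apply Matrix.det_zero_of_column_eq (i := (Fin.last n).castSucc)
            (j := Fin.last (n+1)) (Fin.castSucc_lt_last _).ne
          intro k
          rw [Matrix.updateCol_ne (Fin.castSucc_lt_last _).ne, Matrix.updateCol_self]
        simp only [hφf, h1, h2, h3]
        ring
      · -- c₀ = c₁.castSucc : an interior column
        have h1 : (Bo.updateCol (Fin.last n)
            (fun r => Q (rowBump n r) (c₁.castSucc : Fin (n+1)).castSucc)).det = 0 := by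
          apply Matrix.det_zero_of_column_eq (i := c₁.castSucc) (j := Fin.last n)
            (Fin.castSucc_lt_last _).ne
          intro k
          rw [Matrix.updateCol_ne (Fin.castSucc_lt_last _).ne, Matrix.updateCol_self,
            hQcast]
          rfl
        have h2 : (T.updateCol (Fin.last n)
            (fun r : Fin (n+1) => Q r.castSucc (c₁.castSucc : Fin (n+1)).castSucc)).det = 0 := by
          apply Matrix.det_zero_of_column_eq (i := c₁.castSucc) (j := Fin.last n)
            (Fin.castSucc_lt_last _).ne
          intro k
          rw [Matrix.updateCol_ne (Fin.castSucc_lt_last _).ne, Matrix.updateCol_self,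
            hQcast]
          rfl
        have h3 : (Q.updateCol (Fin.last (n+1))
            (fun r => Q r (c₁.castSucc : Fin (n+1)).castSucc)).det = 0 := by
          apply Matrix.det_zero_of_column_eq (i := (c₁.castSucc : Fin (n+1)).castSucc)
            (j := Fin.last (n+1)) (Fin.castSucc_lt_last _).ne
          intro k
          rw [Matrix.updateCol_ne (Fin.castSucc_lt_last _).ne, Matrix.updateCol_self]
        simp only [hφf, h1, h2, h3]
        ring
  -- u is a combination of the columns of Q
  have hQunit : IsUnit Q.det := by rw [hQdet]; exact isUnit_iff_ne_zero.2 htop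
  have hu : u = ∑ c : Fin (n+2), (Q⁻¹ *ᵥ u) c • (fun r => Q r c) := by
    funext r
    have : Q *ᵥ (Q⁻¹ *ᵥ u) = u := by
      rw [Matrix.mulVec_mulVec, Matrix.mul_nonsing_inv _ hQunit, Matrix.one_mulVec]
    calc u r = (Q *ᵥ (Q⁻¹ *ᵥ u)) r := by rw [this]
    _ = ∑ c, Q r c * (Q⁻¹ *ᵥ u) c := rfl
    _ = (∑ c : Fin (n+2), (Q⁻¹ *ᵥ u) c • (fun r => Q r c)) r := by
        rw [Finset.sum_apply]
        exact Finset.sum_congr rfl fun c _ => by simp [mul_comm]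
  -- conclude : φf u = 0
  have hφsum : ∀ (s : Finset (Fin (n+2))) (w : Fin (n+2) → ℝ),
      φf (∑ c ∈ s, w c • (fun r => Q r c)) = ∑ c ∈ s, w c * φf (fun r => Q r c) := by
    intro s w
    induction s using Finset.induction with
    | empty =>
        simp only [Finset.sum_empty]
        have : φf 0 = 0 := by
          have := hsmul 0 0
          simpa using this
        simpa using this
    | insert a s hns ih =>
        rw [Finset.sum_insert hns, hadd, hsmul, ih, Finset.sum_insert hns]
  have hfu : φf u = 0 := by
    rw [hu, hφsum]
    simp only [hcol, mul_zero, Finset.sum_const_zero]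
  simp only [hφf] at hfu
  linarith [hfu]
open Set Matrix Finset Topology Filter

-- ===== generic analytic helpers (from a.lean) and det-derivative (b.lean), frobKey (c.lean) assumed =====

section helpers
variable {m : ℕ} {s : Set ℝ} {x : ℝ}

lemma analyticOn_det (A : Fin m → Fin m → ℝ → ℝ) (h : ∀ r c, AnalyticOn ℝ (A r c) s) :
    AnalyticOn ℝ (fun x => (Matrix.of fun r c : Fin m => A r c x).det) s := by
  have he : (fun x => (Matrix.of fun r c : Fin m => A r c x).det)
      = fun x => ∑ σ : Equiv.Perm (Fin m), ((Equiv.Perm.sign σ : ℤ) : ℝ) * ∏ i, A (σ i) i x := by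
    funext x
    rw [Matrix.det_apply]
    exact Finset.sum_congr rfl fun σ _ => by rw [Units.smul_def, zsmul_eq_mul]; rfl
  rw [he]
  exact Finset.analyticOn_fun_sum _ fun σ _ =>
    (analyticOn_const.mul (Finset.analyticOn_fun_prod _ fun i _ => h (σ i) i))

lemma rowBump_coe (n : ℕ) (r : Fin (n+1)) :
    ((rowBump n r : Fin (n+2)) : ℕ) = if (r : ℕ) = n then (r : ℕ) + 1 else (r : ℕ) := by
  rw [rowBump]
  by_cases h : r = Fin.last n
  · rw [if_pos h, if_pos (by rw [h, Fin.val_last]), Fin.val_last, h, Fin.val_last]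
  · rw [if_neg h, if_neg (fun hv => h (Fin.ext (by rw [hv, Fin.val_last]))), Fin.coe_castSucc]

/-- derivative of a Wronskian-style determinant: the entries in row `r` differentiate to
the entries of row `r+1`, so only the bump of the last row survives. -/
lemma hasDerivWithinAt_wronskyLike (E : ℕ → ℕ → ℝ → ℝ)
    (hE : ∀ r c : ℕ, c ≤ m → HasDerivWithinAt (E r c) (E (r+1) c x) s x) :
    HasDerivWithinAt (fun y => (Matrix.of fun r c : Fin (m+1) => E (r:ℕ) (c:ℕ) y).det)
      ((Matrix.of fun r c : Fin (m+1) =>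
        E ((rowBump m r : Fin (m+2)) : ℕ) (c:ℕ) x).det) s x := by
  have H := hasDerivWithinAt_det_row (fun y => Matrix.of fun r c : Fin (m+1) => E r c y)
      (Matrix.of fun r c : Fin (m+1) => E ((r:ℕ)+1) c x)
      (fun r c => hE r c (Nat.lt_succ_iff.mp c.isLt))
  have hsum : (∑ r : Fin (m+1), (((Matrix.of fun r c : Fin (m+1) => E (r:ℕ) (c:ℕ) x)).updateRow r
        (fun c => E ((r:ℕ)+1) (c:ℕ) x)).det)
      = (Matrix.of fun r c : Fin (m+1) => E ((rowBump m r : Fin (m+2)) : ℕ) (c:ℕ) x).det := by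
    rw [Finset.sum_eq_single (Fin.last m)]
    · congr 1
      ext r c
      rw [Matrix.updateRow_apply]
      by_cases h : r = Fin.last m
      · rw [if_pos h, Matrix.of_apply, rowBump_coe, h, Fin.val_last, if_pos rfl]
      · rw [if_neg h, Matrix.of_apply, Matrix.of_apply, rowBump_coe,
          if_neg (fun hv => h (Fin.ext (by rw [hv, Fin.val_last])))]
    · intro r _ hr
      have hrv : (r : ℕ) < m := by
        rcases Nat.lt_succ_iff_lt_or_eq.mp r.isLt with h | h
        · exact h
        · exact absurd (Fin.ext (by rw [h, Fin.val_last])) hr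
      apply Matrix.det_zero_of_row_eq (i := r) (j := ⟨(r:ℕ)+1, by omega⟩)
      · intro he
        have h' := congrArg Fin.val he
        simp only at h'
        omega
      · funext c
        have hne : (⟨(r:ℕ)+1, by omega⟩ : Fin (m+1)) ≠ r := by
          intro he
          have h' := congrArg Fin.val he
          simp only at h'
          omega
        rw [Matrix.updateRow_self, Matrix.updateRow_ne hne]
        rfl
    · intro h; exact absurd (Finset.mem_univ _) h
  rw [← hsum]
  exact H

end helpers
open Set Matrix Finset Topology Filter

lemma det_updateCol_sum' {m : ℕ} (C : Matrix (Fin m) (Fin m) ℝ) (j : Fin m)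
    (t : Finset ℕ) (g : ℕ → Fin m → ℝ) :
    (C.updateCol j (fun r => ∑ a ∈ t, g a r)).det = ∑ a ∈ t, (C.updateCol j (g a)).det := by
  induction t using Finset.induction with
  | empty =>
      simp only [Finset.sum_empty]
      exact Matrix.det_eq_zero_of_column_eq_zero j (fun i => by rw [Matrix.updateCol_self])
  | insert a t hns ih =>
      have hcol : (fun r => ∑ b ∈ insert a t, g b r)
          = g a + fun r => ∑ b ∈ t, g b r := by
        funext r; rw [Finset.sum_insert hns]; rfl
      rw [hcol, Matrix.det_updateCol_add, ih, Finset.sum_insert hns]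


/-- Frobenius' lemma: if `f 0, …, f (k-1)` are analytic on the interval `I`, then on any
subinterval `J` of `I` on which the Wronskians `W_1, …, W_{k-1}` do not vanish, each `R_i`
(`0 ≤ i ≤ k-1`) is analytic (in particular well-defined), and `R_{k-1} = W_k` on `J`. -/
theorem stmt13 (k : ℕ) (hk : 1 ≤ k) (I : Set ℝ) (hI : I.OrdConnected) (hI' : I.Nontrivial)
    (f : ℕ → ℝ → ℝ) (hf : ∀ i < k, AnalyticOn ℝ (f i) I)
    (J : Set ℝ) (hJI : J ⊆ I) (hJ : J.OrdConnected) (hJ' : J.Nontrivial)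
    (hW : ∀ j, 1 ≤ j → j ≤ k - 1 → ∀ x ∈ J, wronskianOn I f j x ≠ 0) :
    (∀ i ≤ k - 1, AnalyticOn ℝ (frobR I f k i) J) ∧
      ∀ x ∈ J, frobR I f k (k - 1) x = wronskianOn I f k x := by
  obtain ⟨k', rfl⟩ : ∃ k', k = k' + 1 := ⟨k - 1, by omega⟩
  simp only [Nat.add_sub_cancel] at hW ⊢
  have hUI : UniqueDiffOn ℝ I := myUDO hI hI'
  set S : ℝ → ℝ := fun x => ∑ i ∈ Finset.range (k'+1), f i x with hSdef
  have hS : AnalyticOn ℝ S I := Finset.analyticOn_fun_sum _ fun i hi => hf i (Finset.mem_range.mp hi)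
  have hfA : ∀ c : ℕ, c ≤ k' → AnalyticOn ℝ (f c) I := fun c hc => hf c (by omega)
  have hiter : ∀ (g : ℝ → ℝ), AnalyticOn ℝ g I → ∀ r : ℕ,
      AnalyticOn ℝ (iteratedDerivWithin r g I) I := fun g hg r => myIter hg hUI r
  have hWan : ∀ j : ℕ, j ≤ k' + 1 → AnalyticOn ℝ (wronskianOn I f j) I := by
    intro j hj
    have h1 := analyticOn_det (s := I)
      (fun r c : Fin j => iteratedDerivWithin (r:ℕ) (f (c:ℕ)) I)
      (fun r c => hiter _ (hfA c (by have := c.isLt; omega)) r)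
    exact h1.congr fun x hx => rfl
  set Vd : ℕ → ℝ → ℝ := fun i x =>
    (Matrix.of fun r c : Fin (i+1) =>
      if (c:ℕ) = i then iteratedDerivWithin (r:ℕ) S I x
      else iteratedDerivWithin (r:ℕ) (f (c:ℕ)) I x).det with hVddef
  have hVdA : ∀ i : ℕ, i ≤ k' → AnalyticOn ℝ (Vd i) I := by
    intro i hi
    refine analyticOn_det _ (fun r c => ?_)
    by_cases h : (c:ℕ) = i
    · simp only [if_pos h]; exact hiter S hS r
    · simp only [if_neg h]; exact hiter _ (hfA c (by have := c.isLt; omega)) r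
  have hSder : ∀ r : ℕ, ∀ x ∈ I, iteratedDerivWithin r S I x
      = ∑ j ∈ Finset.range (k'+1), iteratedDerivWithin r (f j) I x := by
    intro r
    induction r with
    | zero => intro x hx; simp only [iteratedDerivWithin_zero]; rfl
    | succ r ih =>
      intro x hx
      rw [iteratedDerivWithin_succ, derivWithin_congr (fun y hy => ih y hy) (ih x hx),
        derivWithin_fun_sum (fun j hj =>
          ((hiter _ (hfA j (by have := Finset.mem_range.mp hj; omega)) r).differentiableOn x hx))]
      exact Finset.sum_congr rfl fun j hj => (congrFun iteratedDerivWithin_succ x).symm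
  have hED : ∀ (g : ℝ → ℝ), AnalyticOn ℝ g I → ∀ (r : ℕ), ∀ x ∈ I,
      HasDerivWithinAt (iteratedDerivWithin r g I) (iteratedDerivWithin (r+1) g I x) I x := by
    intro g hg r x hx
    have h1 := ((hiter g hg r).differentiableOn x hx).hasDerivWithinAt
    rwa [← iteratedDerivWithin_succ] at h1
  set J' : Set ℝ := {y | y ∈ I ∧ ∀ j ∈ Finset.Icc 1 k', wronskianOn I f j y ≠ 0} with hJ'def
  have hJJ' : J ⊆ J' := fun y hy =>
    ⟨hJI hy, fun j hj => hW j (Finset.mem_Icc.mp hj).1 (Finset.mem_Icc.mp hj).2 y hy⟩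
  have hnhd : ∀ x ∈ J', J' ∈ 𝓝[I] x := by
    intro x hx
    have h1 : ∀ᶠ y in 𝓝[I] x, ∀ j ∈ Finset.Icc 1 k', wronskianOn I f j y ≠ 0 := by
      rw [Filter.eventually_all_finset]
      intro j hj
      have hcw : ContinuousWithinAt (wronskianOn I f j) I x :=
        ((hWan j (by have := (Finset.mem_Icc.mp hj).2; omega)).continuousOn).continuousWithinAt hx.1
      exact hcw.eventually_ne (hx.2 j hj)
    filter_upwards [self_mem_nhdsWithin, h1] with y hy1 hy2
    exact ⟨hy1, hy2⟩
  have hVdD : ∀ i : ℕ, i ≤ k' → ∀ x ∈ I, HasDerivWithinAt (Vd i)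
      ((Matrix.of fun r c : Fin (i+1) =>
        if (c:ℕ) = i then iteratedDerivWithin ((rowBump i r : Fin (i+2)) : ℕ) S I x
        else iteratedDerivWithin ((rowBump i r : Fin (i+2)) : ℕ) (f (c:ℕ)) I x).det) I x := by
    intro i hi x hx
    exact hasDerivWithinAt_wronskyLike (m := i) (s := I) (x := x)
      (E := fun r c y =>
        if c = i then iteratedDerivWithin r S I y else iteratedDerivWithin r (f c) I y)
      (fun r c hc => by
        by_cases h : c = i
        · simp only [if_pos h]; exact hED S hS r x hx
        · simp only [if_neg h]; exact hED _ (hfA c (by omega)) r x hx)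
  have hWD : ∀ i : ℕ, i ≤ k' → ∀ x ∈ I, HasDerivWithinAt (wronskianOn I f (i+1))
      ((Matrix.of fun r c : Fin (i+1) =>
        iteratedDerivWithin ((rowBump i r : Fin (i+2)) : ℕ) (f (c:ℕ)) I x).det) I x := by
    intro i hi x hx
    exact hasDerivWithinAt_wronskyLike (m := i) (s := I) (x := x)
      (E := fun r c y => iteratedDerivWithin r (f c) I y)
      (fun r c hc => hED _ (hfA c (by omega)) r x hx)
  have hmain : ∀ i : ℕ, i ≤ k' → ∀ x ∈ J', frobR I f (k'+1) i x = Vd i x := by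
    intro i
    induction i with
    | zero =>
      intro _ x hx
      have h0 : ((0 : Fin 1) : ℕ) = 0 := rfl
      simp only [frobR]
      show _ = (Matrix.of fun r c : Fin 1 =>
        if (c:ℕ) = 0 then iteratedDerivWithin (r:ℕ) S I x
        else iteratedDerivWithin (r:ℕ) (f (c:ℕ)) I x).det
      rw [Matrix.det_fin_one, Matrix.of_apply, if_pos h0, h0,
        show iteratedDerivWithin 0 S I x = S x from congrFun iteratedDerivWithin_zero x]
    | succ i ih =>
      intro hik x hx
      have hxI : x ∈ I := hx.1
      have hUx : UniqueDiffWithinAt ℝ I x := hUI x hxI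
      have hik' : i ≤ k' := by omega
      have hW1 : wronskianOn I f (i+1) x ≠ 0 :=
        hx.2 (i+1) (Finset.mem_Icc.mpr ⟨by omega, by omega⟩)
      have hWi : wronskianOn I f i x ≠ 0 := by
        rcases Nat.eq_zero_or_pos i with h0 | h0
        · subst h0
          show ((Matrix.of fun r c : Fin 0 => iteratedDerivWithin (r:ℕ) (f (c:ℕ)) I x).det) ≠ 0
          rw [Matrix.det_fin_zero]; norm_num
        · exact hx.2 i (Finset.mem_Icc.mpr ⟨h0, by omega⟩)
      simp only [frobR]
      have hev : (fun y => frobR I f (k'+1) i y / wronskianOn I f (i+1) y)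
          =ᶠ[𝓝[I] x] (fun y => Vd i y / wronskianOn I f (i+1) y) := by
        filter_upwards [hnhd x hx] with y hy
        rw [ih hik' y hy]
      rw [hev.derivWithin_eq (by rw [ih hik' x hx])]
      rw [derivWithin_fun_div ((hVdD i hik' x hxI).differentiableWithinAt)
        ((hWD i hik' x hxI).differentiableWithinAt) hW1]
      rw [(hVdD i hik' x hxI).derivWithin hUx, (hWD i hik' x hxI).derivWithin hUx]
      -- now the algebraic identity
      set M : Matrix (Fin (i+2)) (Fin (i+1)) ℝ :=
        Matrix.of fun r c => iteratedDerivWithin (r:ℕ) (f (c:ℕ)) I x with hM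
      set u : Fin (i+2) → ℝ := fun r => iteratedDerivWithin (r:ℕ) S I x with hu
      have cW1 : (Matrix.of fun r c : Fin (i+1) => M r.castSucc c).det
          = wronskianOn I f (i+1) x := rfl
      have cWi : (Matrix.of fun r c : Fin i => M r.castSucc.castSucc c.castSucc).det
          = wronskianOn I f i x := rfl
      have cVd : ((Matrix.of fun r c : Fin (i+1) => M r.castSucc c).updateCol (Fin.last i)
          (fun r => u r.castSucc)).det = Vd i x := by
        congr 1; ext r c
        rw [Matrix.updateCol_apply]
        by_cases h : c = Fin.last i
        · have hc : (c:ℕ) = i := by rw [h, Fin.val_last]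
          rw [if_pos h, Matrix.of_apply, if_pos hc]
          rfl
        · have hc : ¬((c:ℕ) = i) := fun hv => h (Fin.ext (by rw [hv, Fin.val_last]))
          rw [if_neg h, Matrix.of_apply, Matrix.of_apply, if_neg hc]
          rfl
      have cV' : ((Matrix.of fun r c : Fin (i+1) => M (rowBump i r) c).updateCol (Fin.last i)
          (fun r => u (rowBump i r))).det
          = (Matrix.of fun r c : Fin (i+1) =>
            if (c:ℕ) = i then iteratedDerivWithin ((rowBump i r : Fin (i+2)) : ℕ) S I x
            else iteratedDerivWithin ((rowBump i r : Fin (i+2)) : ℕ) (f (c:ℕ)) I x).det := by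
        congr 1; ext r c
        rw [Matrix.updateCol_apply]
        by_cases h : c = Fin.last i
        · have hc : (c:ℕ) = i := by rw [h, Fin.val_last]
          rw [if_pos h, Matrix.of_apply, if_pos hc]
        · have hc : ¬((c:ℕ) = i) := fun hv => h (Fin.ext (by rw [hv, Fin.val_last]))
          rw [if_neg h, Matrix.of_apply, Matrix.of_apply, if_neg hc]
          rfl
      have cW' : (Matrix.of fun r c : Fin (i+1) => M (rowBump i r) c).det
          = (Matrix.of fun r c : Fin (i+1) =>
            iteratedDerivWithin ((rowBump i r : Fin (i+2)) : ℕ) (f (c:ℕ)) I x).det := rfl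
      have cBig : ((Matrix.of fun r c : Fin (i+2) =>
            (Fin.snoc (M r) ((Pi.single (Fin.last (i+1)) (1:ℝ) : Fin (i+2) → ℝ) r)
              : Fin (i+2) → ℝ) c).updateCol (Fin.last (i+1)) u).det = Vd (i+1) x := by
        congr 1; ext r c
        rw [Matrix.updateCol_apply]
        by_cases h : c = Fin.last (i+1)
        · have hc : (c:ℕ) = i + 1 := by rw [h, Fin.val_last]
          rw [if_pos h, Matrix.of_apply, if_pos hc]
        · obtain ⟨c₀, rfl⟩ := Fin.exists_castSucc_eq.mpr h
          have hc : ¬(((c₀.castSucc : Fin (i+2)) :ℕ) = i + 1) := by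
            rw [Fin.coe_castSucc]; have := c₀.isLt; omega
          rw [if_neg h, Matrix.of_apply, Matrix.of_apply, if_neg hc, Fin.snoc_castSucc]
          rfl
      have key := frobKey (n := i) M u (by rw [cW1]; exact hW1)
      rw [cW1, cWi, cVd, cV', cW', cBig] at key
      -- final algebra
      rw [show (Matrix.of fun r c : Fin (i+1) =>
            if (c:ℕ) = i then iteratedDerivWithin ((rowBump i r : Fin (i+2)) : ℕ) S I x
            else iteratedDerivWithin ((rowBump i r : Fin (i+2)) : ℕ) (f (c:ℕ)) I x).det *
            wronskianOn I f (i+1) x - Vd i x *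
            (Matrix.of fun r c : Fin (i+1) =>
              iteratedDerivWithin ((rowBump i r : Fin (i+2)) : ℕ) (f (c:ℕ)) I x).det
          = wronskianOn I f i x * Vd (i+1) x by linarith [key]]
      field_simp
  refine ⟨fun i hi => ?_, fun x hx => ?_⟩
  · exact ((hVdA i hi).mono hJI).congr (fun x hx => hmain i hi x (hJJ' hx))
  · rw [hmain k' le_rfl x (hJJ' hx)]
    have hxI : x ∈ I := hJI hx
    have e1 : Vd k' x = ((Matrix.of fun r c : Fin (k'+1) =>
        iteratedDerivWithin (r:ℕ) (f (c:ℕ)) I x).updateCol (Fin.last k')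
        (fun r => ∑ j ∈ Finset.range (k'+1), iteratedDerivWithin (r:ℕ) (f j) I x)).det := by
      show (Matrix.of fun r c : Fin (k'+1) =>
        if (c:ℕ) = k' then iteratedDerivWithin (r:ℕ) S I x
        else iteratedDerivWithin (r:ℕ) (f (c:ℕ)) I x).det = _
      congr 1; ext r c
      rw [Matrix.updateCol_apply, Matrix.of_apply]
      by_cases h : c = Fin.last k'
      · have hc : (c:ℕ) = k' := by rw [h, Fin.val_last]
        rw [if_pos h, if_pos hc]
        exact hSder r x hxI
      · have hc : ¬((c:ℕ) = k') := fun hv => h (Fin.ext (by rw [hv, Fin.val_last]))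
        rw [if_neg h, if_neg hc]
        rfl
    rw [e1, det_updateCol_sum']
    rw [Finset.sum_eq_single_of_mem k' (Finset.self_mem_range_succ k')]
    · have hc : (fun r : Fin (k'+1) => iteratedDerivWithin (r:ℕ) (f k') I x)
          = fun r => (Matrix.of fun r c : Fin (k'+1) =>
            iteratedDerivWithin (r:ℕ) (f (c:ℕ)) I x) r (Fin.last k') := by
        funext r; simp only [Matrix.of_apply, Fin.val_last]
      rw [hc, Matrix.updateCol_eq_self]
      rfl
    · intro j hj hne
      have hjlt : j < k' := by have := Finset.mem_range.mp hj; omega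
      apply Matrix.det_zero_of_column_eq (i := (⟨j, by omega⟩ : Fin (k'+1))) (j := Fin.last k')
      · intro he
        have h' := congrArg Fin.val he
        simp only [Fin.val_last] at h'
        omega
      · intro r
        rw [Matrix.updateCol_ne (by
            intro he
            have h' := congrArg Fin.val he
            simp only [Fin.val_last] at h'
            omega), Matrix.updateCol_self]
        rfl
end

section
/- Let f be a non-constant real polynomial and for integers p ≥ 1 and 0 ≤ i ≤ p define the polynomial h_{p,i} = (p!/(p−i)!) · (f′)^i · f^{p−i}. Then there exist rational functions F_{i,q} for 0 ≤ i ≤ q such that: (1) F_{q,q} = 1 for all q ≥ 0; (2) (f′)^q · F_{i,q} is a polynomial for all 0 ≤ i ≤ q; (3) for all q ≥ 0 and p ≥ 1, the q-th derivative of f^p equals Σ_{i=0}^{q} h_{p,i} · F_{i,q}. In particular the F_{i,q} do not depend on p. -/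
open Polynomial

noncomputable def Gaux (f : Polynomial ℝ) : ℕ → ℕ → Polynomial ℝ
  | 0, 0 => 1
  | _+1, 0 => 0
  | 0, q+1 => derivative (Gaux f 0 q)
  | i+1, q+1 => derivative (Gaux f (i+1) q) + derivative f * Gaux f i q

lemma Gaux_zero (f : Polynomial ℝ) : ∀ q i, q < i → Gaux f i q = 0 := by
  intro q
  induction q with
  | zero => intro i hi; match i, hi with
    | i+1, _ => rfl
  | succ q ih =>
    intro i hi
    match i, hi with
    | i+1, hi =>
      show derivative (Gaux f (i+1) q) + derivative f * Gaux f i q = 0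
      rw [ih (i+1) (by omega), ih i (by omega)]
      simp

lemma Gaux_diag (f : Polynomial ℝ) : ∀ q, Gaux f q q = derivative f ^ q := by
  intro q
  induction q with
  | zero => rfl
  | succ q ih =>
    show derivative (Gaux f (q+1) q) + derivative f * Gaux f q q = _
    rw [Gaux_zero f q (q+1) (by omega), ih]
    simp [pow_succ, mul_comm]

lemma Gaux_succ (f : Polynomial ℝ) (i q : ℕ) :
    Gaux f i (q+1) = derivative (Gaux f i q) +
      derivative f * (if i = 0 then 0 else Gaux f (i-1) q) := by
  match i with
  | 0 => simp [Gaux]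
  | i+1 => simp [Gaux]

lemma key (f : Polynomial ℝ) : ∀ q p, (fun g => derivative g)^[q] (f ^ p) =
    ∑ i ∈ Finset.range (q+1),
      Polynomial.C ((p.descFactorial i : ℝ)) * f ^ (p - i) * Gaux f i q := by
  intro q
  induction q with
  | zero => intro p; simp [Gaux]
  | succ q ih =>
    intro p
    rw [Function.iterate_succ_apply', ih p, derivative_sum]
    have step : ∀ i, derivative (Polynomial.C ((p.descFactorial i : ℝ)) * f ^ (p - i) * Gaux f i q)
        = Polynomial.C ((p.descFactorial (i+1) : ℝ)) * f ^ (p - (i+1)) * (derivative f * Gaux f i q)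
          + Polynomial.C ((p.descFactorial i : ℝ)) * f ^ (p - i) * derivative (Gaux f i q) := by
      intro i
      rw [derivative_mul, derivative_mul, derivative_C, derivative_pow]
      have : (p.descFactorial (i+1) : ℝ) = ((p - i : ℕ) : ℝ) * (p.descFactorial i : ℝ) := by
        rw [Nat.descFactorial_succ]; push_cast; ring
      rw [this]
      have : p - (i+1) = p - i - 1 := by omega
      rw [this]
      simp only [map_mul]
      ring
    rw [Finset.sum_congr rfl (fun i _ => step i), Finset.sum_add_distrib]
    -- RHS
    have rhs : ∑ i ∈ Finset.range (q+2),
        Polynomial.C ((p.descFactorial i : ℝ)) * f ^ (p - i) * Gaux f i (q+1)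
        = (∑ i ∈ Finset.range (q+2),
            Polynomial.C ((p.descFactorial i : ℝ)) * f ^ (p - i) *
              (derivative f * (if i = 0 then 0 else Gaux f (i-1) q)))
          + ∑ i ∈ Finset.range (q+2),
            Polynomial.C ((p.descFactorial i : ℝ)) * f ^ (p - i) * derivative (Gaux f i q) := by
      rw [← Finset.sum_add_distrib]
      refine Finset.sum_congr rfl (fun i _ => ?_)
      rw [Gaux_succ]; ring
    rw [rhs]
    congr 1
    · conv_rhs => rw [Finset.sum_range_succ']
      simp only [Nat.add_sub_cancel, if_neg (Nat.succ_ne_zero _), if_pos rfl, mul_zero,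
        add_zero]
      simp
    · conv_rhs => rw [Finset.sum_range_succ]
      rw [Gaux_zero f q (q+1) (by omega)]
      simp

/-- For a non-constant real polynomial `f`, setting
`h_{p,i} = (p!/(p-i)!) (f')^i f^(p-i)`, there exist rational functions `F_{i,q}`
(independent of `p`) such that (1) `F_{q,q} = 1`, (2) `(f')^q · F_{i,q}` is a polynomial,
and (3) `(f^p)^{(q)} = Σ_{i=0}^q h_{p,i} F_{i,q}` for all `q ≥ 0` and `p ≥ 1`. -/
theorem stmt14 (f : Polynomial ℝ) (hf : 0 < f.natDegree) :
    ∃ F : ℕ → ℕ → RatFunc ℝ,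
      (∀ q, F q q = 1) ∧
      (∀ q i, i ≤ q →
        ∃ g : Polynomial ℝ,
          algebraMap (Polynomial ℝ) (RatFunc ℝ) ((Polynomial.derivative f) ^ q) * F i q =
            algebraMap (Polynomial ℝ) (RatFunc ℝ) g) ∧
      (∀ q p, 1 ≤ p →
        algebraMap (Polynomial ℝ) (RatFunc ℝ)
            ((fun g => Polynomial.derivative g)^[q] (f ^ p)) =
          ∑ i ∈ Finset.range (q + 1),
            algebraMap (Polynomial ℝ) (RatFunc ℝ)
                (Polynomial.C ((p.descFactorial i : ℝ)) *
                  (Polynomial.derivative f) ^ i * f ^ (p - i)) *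
              F i q) := by
  have hd : derivative f ≠ 0 := by
    intro h
    have := natDegree_eq_zero_of_derivative_eq_zero h
    omega
  set A := algebraMap (Polynomial ℝ) (RatFunc ℝ) with hA
  have hd' : A (derivative f) ≠ 0 := by
    simpa using (map_ne_zero_iff A (RatFunc.algebraMap_injective ℝ)).mpr hd
  refine ⟨fun i q => A (Gaux f i q) / (A (derivative f)) ^ i, ?_, ?_, ?_⟩
  · intro q
    show A (Gaux f q q) / (A (derivative f)) ^ q = 1
    rw [Gaux_diag, map_pow, div_self (pow_ne_zero _ hd')]
  · intro q i hiq
    refine ⟨derivative f ^ (q - i) * Gaux f i q, ?_⟩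
    rw [map_mul, map_pow, map_pow]
    rw [show q = (q - i) + i by omega, pow_add]
    field_simp
    rw [Nat.add_sub_cancel]
    ring
  · intro q p hp
    rw [key f q p, map_sum]
    refine Finset.sum_congr rfl (fun i _ => ?_)
    rw [map_mul, map_mul, map_mul, map_mul, map_pow]
    field_simp
    rw [map_pow]
end

section
/- Let f be a non-constant real analytic function on a real interval I, let k ≥ 1, and let α_1, …, α_k be pairwise distinct natural numbers. Then {x ∈ I : there exists s with 1 ≤ s ≤ k such that W(f^{α_1+k}, …, f^{α_s+k})(x) = 0} ⊆ {x ∈ I : f(x)·f′(x) = 0}. -/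
open Finset Polynomial

private lemma aux_coeff {I : Set ℝ} (hu : UniqueDiffOn ℝ I) {f : ℝ → ℝ}
    (hf : ContDiffOn ℝ (⊤ : ℕ∞) f I) (r : ℕ) :
    ∃ c : ℕ → ℝ → ℝ, (∀ m, ContDiffOn ℝ (⊤ : ℕ∞) (c m) I) ∧
      (∀ x ∈ I, c r x = derivWithin f I x ^ r) ∧ (∀ m, r < m → ∀ x ∈ I, c m x = 0) ∧
      ∀ a : ℕ, r ≤ a → ∀ x ∈ I,
        iteratedDerivWithin r (fun y => f y ^ a) I x =
          ∑ m ∈ Finset.range (r + 1),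
            c m x * (descPochhammer ℝ m).eval (a : ℝ) * f x ^ (a - m) := by
  have hinf : ((⊤ : ℕ∞) : WithTop ℕ∞) + 1 ≤ ((⊤ : ℕ∞) : WithTop ℕ∞) := by
    exact_mod_cast le_of_eq (by simp : ((⊤ : ℕ∞) + 1) = (⊤ : ℕ∞))
  have hone : (1 : WithTop ℕ∞) ≤ ((⊤ : ℕ∞) : WithTop ℕ∞) := by
    exact_mod_cast (le_top : (1:ℕ∞) ≤ ⊤)
  induction r with
  | zero =>
    refine ⟨fun m => if m = 0 then (fun _ => 1) else (fun _ => 0), fun m => ?_, ?_, ?_, ?_⟩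
    · by_cases h : m = 0 <;> simp [h] <;> exact contDiffOn_const
    · intro x _; simp
    · intro m hm x _; simp [hm.ne']
    · intro a _ x hx; simp
  | succ r ih =>
    obtain ⟨c, hsm, htop, hzero, hsum⟩ := ih
    set f' : ℝ → ℝ := derivWithin f I with hf'def
    have hf'sm : ContDiffOn ℝ (⊤ : ℕ∞) f' I := hf.derivWithin hu hinf
    set d : ℕ → ℝ → ℝ := fun m x =>
      derivWithin (c m) I x + (if m = 0 then 0 else c (m - 1) x * f' x) with hd
    have hderiv0 : ∀ m, r < m → ∀ x ∈ I, derivWithin (c m) I x = 0 := by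
      intro m hm x hx
      rw [derivWithin_congr (fun y hy => hzero m hm y hy) (hzero m hm x hx)]
      exact (hasDerivWithinAt_const x I (0:ℝ)).derivWithin (hu x hx)
    refine ⟨d, ?_, ?_, ?_, ?_⟩
    · intro m
      have h1 : ContDiffOn ℝ (⊤ : ℕ∞) (derivWithin (c m) I) I := (hsm m).derivWithin hu hinf
      rcases m with _ | m
      · simpa [hd] using h1
      · simpa [hd] using h1.add ((hsm m).mul hf'sm)
    · intro x hx
      have : derivWithin (c (r + 1)) I x = 0 := hderiv0 (r + 1) (Nat.lt_succ_self r) x hx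
      simp [hd, this, htop x hx, pow_succ]
    · intro m hm x hx
      rcases m with _ | m
      · omega
      · have h1 : derivWithin (c (m + 1)) I x = 0 := hderiv0 (m + 1) (by omega) x hx
        have h2 : c m x = 0 := hzero m (by omega) x hx
        simp [hd, h1, h2]
    · intro a ha x hx
      have hx' : UniqueDiffWithinAt ℝ I x := hu x hx
      set P : ℕ → ℝ := fun m => (descPochhammer ℝ m).eval (a : ℝ) with hP
      rw [iteratedDerivWithin_succ]
      have hEq : Set.EqOn (iteratedDerivWithin r (fun y => f y ^ a) I)
          (fun y => ∑ m ∈ Finset.range (r + 1), c m y * P m * f y ^ (a - m)) I :=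
        fun y hy => hsum a (Nat.le_of_succ_le ha) y hy
      rw [derivWithin_congr hEq (hEq hx)]
      have hfd : DifferentiableWithinAt ℝ f I x := (hf.differentiableOn (by simp)) x hx
      have hder : ∀ m ∈ Finset.range (r + 1),
          HasDerivWithinAt (fun y => c m y * P m * f y ^ (a - m))
            (derivWithin (c m) I x * P m * f x ^ (a - m)
              + c m x * P m * (((a - m : ℕ) : ℝ) * f x ^ (a - m - 1) * f' x)) I x := by
        intro m _
        have h1 : HasDerivWithinAt (c m) (derivWithin (c m) I x) I x :=
          (((hsm m).differentiableOn (by simp)) x hx).hasDerivWithinAt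
        have h2 : HasDerivWithinAt f (f' x) I x := hfd.hasDerivWithinAt
        exact (h1.mul_const (P m)).mul (h2.pow (a - m))
      rw [(HasDerivWithinAt.fun_sum hder).derivWithin hx']
      -- now the algebra
      have key : ∀ i ∈ Finset.range (r + 1),
          c i x * P i * (((a - i : ℕ) : ℝ) * f x ^ (a - i - 1) * f' x)
            = c i x * f' x * P (i + 1) * f x ^ (a - (i + 1)) := by
        intro i hi
        have hia : i ≤ a := by have := Finset.mem_range.mp hi; omega
        have hcast : ((a - i : ℕ) : ℝ) = (a : ℝ) - i := by
          push_cast [hia]; ring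
        have hsub : a - i - 1 = a - (i + 1) := by omega
        rw [hP]
        simp only [descPochhammer_succ_eval, hcast, hsub]
        ring
      have hterm : ∀ m ∈ Finset.range (r + 2),
          d m x * P m * f x ^ (a - m)
            = derivWithin (c m) I x * P m * f x ^ (a - m)
              + (if m = 0 then 0 else c (m - 1) x * f' x * P m * f x ^ (a - m)) := by
        intro m _
        rcases m with _ | m
        · simp [hd]
        · simp only [hd, Nat.succ_ne_zero, if_false, Nat.add_sub_cancel]
          ring
      rw [Finset.sum_congr rfl hterm, Finset.sum_add_distrib, Finset.sum_congr rfl key]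
      conv_rhs => rw [Finset.sum_add_distrib, Finset.sum_range_succ (fun m => derivWithin (c m) I x * P m * f x ^ (a - m)),
        Finset.sum_range_succ' (fun m => if m = 0 then 0
          else c (m - 1) x * f' x * P m * f x ^ (a - m)) (r + 1)]
      rw [hderiv0 (r + 1) (Nat.lt_succ_self r) x hx]
      simp

/-- If `f` is a non-constant analytic function on an interval `I` and `α_1, …, α_k` are
pairwise distinct natural numbers (`k ≥ 1`), then every zero in `I` of one of the
Wronskians `W(f^{α_1+k}, …, f^{α_s+k})`, `1 ≤ s ≤ k`, is a zero of `f·f′`. -/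
theorem stmt15 (k : ℕ) (hk : 1 ≤ k) (I : Set ℝ) (hI : I.OrdConnected) (hI' : I.Nontrivial)
    (f : ℝ → ℝ) (hf : AnalyticOn ℝ f I)
    (hnc : ∃ x ∈ I, ∃ y ∈ I, f x ≠ f y)
    (α : ℕ → ℕ) (hα : ∀ i < k, ∀ j < k, α i = α j → i = j) :
    {x ∈ I | ∃ s, 1 ≤ s ∧ s ≤ k ∧
        wronskianOn I (fun i y => f y ^ (α i + k)) s x = 0} ⊆
      {x ∈ I | f x * derivWithin f I x = 0} := by
  -- unique differentiability
  have hint : (interior I).Nonempty := by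
    obtain ⟨p, hp, q, hq, hpq⟩ := hI'
    rcases hpq.lt_or_gt with h | h
    · have hsub : Set.Ioo p q ⊆ I := fun z hz => hI.out hp hq ⟨hz.1.le, hz.2.le⟩
      exact (Set.nonempty_Ioo.mpr h).mono (isOpen_Ioo.subset_interior_iff.mpr hsub)
    · have hsub : Set.Ioo q p ⊆ I := fun z hz => hI.out hq hp ⟨hz.1.le, hz.2.le⟩
      exact (Set.nonempty_Ioo.mpr h).mono (isOpen_Ioo.subset_interior_iff.mpr hsub)
  have hu : UniqueDiffOn ℝ I := uniqueDiffOn_convex hI.convex hint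
  have hsmooth : ContDiffOn ℝ (⊤ : ℕ∞) f I := hf.contDiffOn hu
  have hcc := fun r => aux_coeff hu hsmooth r
  choose C hC1 hC2 hC3 hC4 using hcc
  rintro x ⟨hxI, s, hs1, hs2, hW⟩
  refine ⟨hxI, ?_⟩
  by_contra hne
  have hfx : f x ≠ 0 := fun h => hne (by rw [h, zero_mul])
  have hf'x : derivWithin f I x ≠ 0 := fun h => hne (by rw [h, mul_zero])
  set L : Matrix (Fin s) (Fin s) ℝ :=
    Matrix.of fun r m : Fin s => if (m : ℕ) ≤ (r : ℕ) then C r m x else 0 with hL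
  set V : Matrix (Fin s) (Fin s) ℝ :=
    Matrix.of fun m c : Fin s =>
      (descPochhammer ℝ (m : ℕ)).eval ((α (c : ℕ) + k : ℕ) : ℝ) * f x ^ (α (c : ℕ) + k - (m : ℕ))
    with hV
  -- the Wronskian matrix factors
  have hM : wronskianOn I (fun i y => f y ^ (α i + k)) s x = (L * V).det := by
    unfold wronskianOn
    congr 1
    ext r c
    have hra : (r : ℕ) ≤ α (c : ℕ) + k := by have := r.2; omega
    rw [Matrix.mul_apply]
    have h1 : iteratedDerivWithin (r : ℕ) (fun y => f y ^ (α (c : ℕ) + k)) I x =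
        ∑ m ∈ Finset.range ((r : ℕ) + 1), C r m x *
          (descPochhammer ℝ m).eval ((α (c : ℕ) + k : ℕ) : ℝ) * f x ^ (α (c : ℕ) + k - m) :=
      hC4 r (α (c : ℕ) + k) hra x hxI
    have h2 : ∑ m : Fin s, L r m * V m c =
        ∑ m ∈ Finset.range s, (if m ≤ (r : ℕ) then C r m x else 0) *
          ((descPochhammer ℝ m).eval ((α (c : ℕ) + k : ℕ) : ℝ) * f x ^ (α (c : ℕ) + k - m)) := by
      rw [← Fin.sum_univ_eq_sum_range (fun m => (if m ≤ (r : ℕ) then C r m x else 0) *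
        ((descPochhammer ℝ m).eval ((α (c : ℕ) + k : ℕ) : ℝ) * f x ^ (α (c : ℕ) + k - m))) s]
      rfl
    have h3 : ∑ m ∈ Finset.range s, (if m ≤ (r : ℕ) then C r m x else 0) *
          ((descPochhammer ℝ m).eval ((α (c : ℕ) + k : ℝ)) * f x ^ (α (c : ℕ) + k - m)) =
        ∑ m ∈ Finset.range ((r : ℕ) + 1), C r m x *
          ((descPochhammer ℝ m).eval ((α (c : ℕ) + k : ℝ)) * f x ^ (α (c : ℕ) + k - m)) := by
      rw [← Finset.sum_subset (Finset.range_subset_range.mpr (Nat.succ_le_of_lt r.2))]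
      · exact Finset.sum_congr rfl fun m hm => by
          rw [if_pos (Nat.lt_succ_iff.mp (Finset.mem_range.mp hm))]
      · intro m _ hm
        rw [if_neg (fun h => hm (Finset.mem_range.mpr (Nat.lt_succ_of_le h))), zero_mul]
    simp only [Matrix.of_apply]
    rw [h1, h2]
    push_cast at h3 ⊢
    rw [h3]
    exact Finset.sum_congr rfl fun m _ => by ring
  rw [hM, Matrix.det_mul] at hW
  -- determinant of L
  have hLdet : L.det = ∏ r : Fin s, derivWithin f I x ^ (r : ℕ) := by
    rw [Matrix.det_of_lowerTriangular L (fun i j hij => by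
      simp only [hL, Matrix.of_apply]
      exact if_neg (by exact fun h => absurd h (not_le.mpr hij)))]
    exact Finset.prod_congr rfl fun r _ => by
      simp only [hL, Matrix.of_apply, le_refl, if_true]
      exact hC2 r x hxI
  -- determinant of V
  set v : Fin s → ℝ := fun c => ((α (c : ℕ) + k : ℕ) : ℝ) with hv
  have hentry : V = Matrix.of (fun m c : Fin s => f x ^ (s - 1 - (m : ℕ)) *
      ((Matrix.of (fun m c : Fin s => f x ^ (α (c : ℕ) + k - (s - 1)) *
        ((Matrix.of (fun m c : Fin s => (descPochhammer ℝ (m : ℕ)).eval (v c))) m c))) m c)) := by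
    ext m c
    have hmk : (m : ℕ) < s := m.2
    have hck : s ≤ k := hs2
    have e : f x ^ (s - 1 - (m : ℕ)) * f x ^ (α (c : ℕ) + k - (s - 1)) =
        f x ^ (α (c : ℕ) + k - (m : ℕ)) := by
      rw [← pow_add]; congr 1; omega
    simp only [hV, Matrix.of_apply]
    rw [← e]; ring
  have hN : (Matrix.of fun m c : Fin s => (descPochhammer ℝ (m : ℕ)).eval (v c)).det =
      (Matrix.vandermonde v).det := by
    rw [← Matrix.det_transpose (Matrix.of fun m c : Fin s =>
      (descPochhammer ℝ (m : ℕ)).eval (v c))]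
    rw [Matrix.det_eval_matrixOfPolynomials_eq_det_vandermonde v
      (fun m : Fin s => descPochhammer ℝ (m : ℕ))
      (fun i => descPochhammer_natDegree ℝ (i : ℕ))
      (fun i => monic_descPochhammer ℝ (i : ℕ))]
    rfl
  have hVdet : V.det = (∏ m : Fin s, f x ^ (s - 1 - (m : ℕ))) *
      ((∏ c : Fin s, f x ^ (α (c : ℕ) + k - (s - 1))) * (Matrix.vandermonde v).det) := by
    rw [hentry, Matrix.det_mul_column, Matrix.det_mul_row, hN]
  have hv_inj : Function.Injective v := by
    intro i j h
    apply Fin.ext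
    refine hα i (lt_of_lt_of_le i.2 hs2) j (lt_of_lt_of_le j.2 hs2) ?_
    have : α (i : ℕ) + k = α (j : ℕ) + k := by
      have h' : ((α (i : ℕ) + k : ℕ) : ℝ) = ((α (j : ℕ) + k : ℕ) : ℝ) := h
      exact_mod_cast h'
    omega
  have h1 : L.det ≠ 0 := by
    rw [hLdet]
    exact Finset.prod_ne_zero_iff.mpr fun r _ => pow_ne_zero _ hf'x
  have h2 : V.det ≠ 0 := by
    rw [hVdet]
    exact mul_ne_zero (Finset.prod_ne_zero_iff.mpr fun m _ => pow_ne_zero _ hfx)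
      (mul_ne_zero (Finset.prod_ne_zero_iff.mpr fun m _ => pow_ne_zero _ hfx)
        (Matrix.det_vandermonde_ne_zero_iff.mpr hv_inj))
  exact (mul_ne_zero h1 h2) hW
end

section
/- Let f be a non-constant real analytic function on a real interval I, let k ≥ 2, and let α_1, …, α_k be pairwise distinct natural numbers. Then {x ∈ I : there exists s with 1 ≤ s ≤ k such that W(f^{α_1+k}, …, f^{α_s+k})(x) = 0} = {x ∈ I : f(x)·f′(x) = 0}. -/
noncomputable def wbell (I : Set ℝ) (f : ℝ → ℝ) : ℕ → ℕ → ℝ → ℝ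
  | 0, 0 => fun _ => 1
  | 0, _+1 => fun _ => 0
  | r+1, 0 => derivWithin (wbell I f r 0) I
  | r+1, m+1 => fun y =>
      derivWithin (wbell I f r (m+1)) I y + wbell I f r m y * derivWithin f I y

@[simp] lemma wbell_zero_zero (I : Set ℝ) (f : ℝ → ℝ) : wbell I f 0 0 = fun _ => 1 := rfl
@[simp] lemma wbell_zero_succ (I : Set ℝ) (f : ℝ → ℝ) (m : ℕ) :
    wbell I f 0 (m+1) = fun _ => 0 := rfl
@[simp] lemma wbell_succ_zero (I : Set ℝ) (f : ℝ → ℝ) (r : ℕ) :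
    wbell I f (r+1) 0 = derivWithin (wbell I f r 0) I := rfl
@[simp] lemma wbell_succ_succ (I : Set ℝ) (f : ℝ → ℝ) (r m : ℕ) :
    wbell I f (r+1) (m+1) = fun y =>
      derivWithin (wbell I f r (m+1)) I y + wbell I f r m y * derivWithin f I y := rfl

lemma wbell_contDiffOn (I : Set ℝ) (f : ℝ → ℝ) (huniq : UniqueDiffOn ℝ I)
    (hf : ContDiffOn ℝ (⊤ : ℕ∞) f I) : ∀ r m, ContDiffOn ℝ (⊤ : ℕ∞) (wbell I f r m) I := by
  intro r
  induction r with
  | zero =>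
    intro m
    cases m with
    | zero => exact contDiffOn_const
    | succ m => exact contDiffOn_const
  | succ r ih =>
    intro m
    cases m with
    | zero => exact (ih 0).derivWithin huniq (by simp)
    | succ m =>
      exact ((ih (m+1)).derivWithin huniq (by simp)).add
        ((ih m).mul (hf.derivWithin huniq (by simp)))

lemma wbell_eq_zero (I : Set ℝ) (f : ℝ → ℝ) (huniq : UniqueDiffOn ℝ I) :
    ∀ r m, r < m → ∀ y ∈ I, wbell I f r m y = 0 := by
  intro r
  induction r with
  | zero =>
    intro m hm y hy
    obtain ⟨m, rfl⟩ := Nat.exists_eq_add_of_lt hm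
    simp
  | succ r ih =>
    intro m hm y hy
    obtain ⟨m', rfl⟩ : ∃ m', m = m' + 1 := ⟨m - 1, by omega⟩
    simp only [wbell_succ_succ]
    have h1 : derivWithin (wbell I f r (m'+1)) I y = 0 := by
      rw [derivWithin_congr (f := fun _ => (0:ℝ)) (fun z hz => ih (m'+1) (by omega) z hz)
        (ih (m'+1) (by omega) y hy), derivWithin_fun_const (s := I) (c := (0:ℝ)), Pi.zero_apply]
    rw [h1, ih m' (by omega) y hy, zero_mul, add_zero]

lemma wbell_diag (I : Set ℝ) (f : ℝ → ℝ) (huniq : UniqueDiffOn ℝ I) :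
    ∀ r, ∀ y ∈ I, wbell I f r r y = (derivWithin f I y) ^ r := by
  intro r
  induction r with
  | zero => intro y hy; simp
  | succ r ih =>
    intro y hy
    simp only [wbell_succ_succ]
    have h1 : derivWithin (wbell I f r (r+1)) I y = 0 := by
      rw [derivWithin_congr (f := fun _ => (0:ℝ))
        (fun z hz => wbell_eq_zero I f huniq r (r+1) (by omega) z hz)
        (wbell_eq_zero I f huniq r (r+1) (by omega) y hy),
        derivWithin_fun_const (s := I) (c := (0:ℝ)), Pi.zero_apply]
    rw [h1, ih y hy, zero_add, pow_succ]

lemma derivWithin_wbell_eq_zero (I : Set ℝ) (f : ℝ → ℝ) (huniq : UniqueDiffOn ℝ I)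
    {r m : ℕ} (h : r < m) {y : ℝ} (hy : y ∈ I) :
    derivWithin (wbell I f r m) I y = 0 := by
  rw [derivWithin_congr (f := fun _ => (0:ℝ)) (fun z hz => wbell_eq_zero I f huniq r m h z hz)
    (wbell_eq_zero I f huniq r m h y hy), derivWithin_fun_const (s := I) (c := (0:ℝ)), Pi.zero_apply]

lemma pow_rep (I : Set ℝ) (f : ℝ → ℝ) (huniq : UniqueDiffOn ℝ I)
    (hf : ContDiffOn ℝ (⊤ : ℕ∞) f I) (n : ℕ) :
    ∀ r, ∀ y ∈ I, f y ≠ 0 →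
      iteratedDerivWithin r (fun z => f z ^ n) I y
        = ∑ m ∈ Finset.range (r+1),
            wbell I f r m y * (descPochhammer ℝ m).eval (n:ℝ) * f y ^ ((n:ℤ) - m) := by
  intro r
  induction r with
  | zero =>
    intro y hy hfy
    simp [iteratedDerivWithin_zero, descPochhammer_zero, zpow_natCast]
  | succ r ih =>
    intro y hy hfy
    have hUD := huniq y hy
    have hfd : DifferentiableWithinAt ℝ f I y :=
      (hf.differentiableOn (by simp)) y hy
    have hf' : HasDerivWithinAt f (derivWithin f I y) I y := hfd.hasDerivWithinAt
    have hterm : ∀ m ∈ Finset.range (r+1), HasDerivWithinAt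
        (fun z => wbell I f r m z * (descPochhammer ℝ m).eval (n:ℝ) * f z ^ ((n:ℤ) - m))
        (derivWithin (wbell I f r m) I y * (descPochhammer ℝ m).eval (n:ℝ) * f y ^ ((n:ℤ) - m)
          + wbell I f r m y * (descPochhammer ℝ m).eval (n:ℝ) *
            (((((n:ℤ) - m) : ℤ) : ℝ) * f y ^ ((n:ℤ) - m - 1) * derivWithin f I y)) I y := by
      intro m _
      have hb : HasDerivWithinAt (wbell I f r m) (derivWithin (wbell I f r m) I y) I y :=
        (((wbell_contDiffOn I f huniq hf r m).differentiableOn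
          (by simp)) y hy).hasDerivWithinAt
      have hz : HasDerivWithinAt (fun z => f z ^ ((n:ℤ) - m))
          (((((n:ℤ) - m) : ℤ) : ℝ) * f y ^ ((n:ℤ) - m - 1) * derivWithin f I y) I y := by
        have := (hasDerivAt_zpow ((n:ℤ) - m) (f y) (Or.inl hfy)).comp_hasDerivWithinAt y hf'
        simpa [Function.comp_def, mul_assoc] using this
      exact (hb.mul_const ((descPochhammer ℝ m).eval (n:ℝ))).mul hz
    have Hsum := HasDerivWithinAt.fun_sum hterm
    have hstep : iteratedDerivWithin (r+1) (fun z => f z ^ n) I y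
        = derivWithin (iteratedDerivWithin r (fun z => f z ^ n) I) I y :=
      congrFun iteratedDerivWithin_succ y
    have heq : iteratedDerivWithin r (fun z => f z ^ n) I =ᶠ[nhdsWithin y I]
        (fun z => ∑ m ∈ Finset.range (r+1),
          wbell I f r m z * (descPochhammer ℝ m).eval (n:ℝ) * f z ^ ((n:ℤ) - m)) := by
      have h1 : ∀ᶠ z in nhdsWithin y I, f z ≠ 0 :=
        Filter.Tendsto.eventually_ne (hf.continuousOn y hy) hfy
      filter_upwards [h1, self_mem_nhdsWithin] with z hz1 hz2
      exact ih z hz2 hz1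
    rw [hstep, heq.derivWithin_eq (ih y hy hfy), Hsum.derivWithin hUD]
    -- now pure algebra
    set d := derivWithin f I y with hd
    set b : ℕ → ℝ := fun m => wbell I f r m y with hb
    set Db : ℕ → ℝ := fun m => derivWithin (wbell I f r m) I y with hDb
    set C : ℕ → ℝ := fun m => (descPochhammer ℝ m).eval (n:ℝ) with hC
    set P : ℕ → ℝ := fun m => f y ^ ((n:ℤ) - m) with hP
    have hCsucc : ∀ m : ℕ, C (m+1) = C m * ((n:ℝ) - m) := by
      intro m
      simp [hC, descPochhammer_succ_right, Polynomial.eval_mul]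
    have hPsucc : ∀ m : ℕ, f y ^ ((n:ℤ) - m - 1) = P (m+1) := by
      intro m
      simp only [hP]
      congr 1
      push_cast
      ring
    have key : ∀ m : ℕ,
        Db m * C m * P m + b m * C m * (((((n:ℤ) - m) : ℤ) : ℝ) * f y ^ ((n:ℤ) - m - 1) * d)
          = Db m * C m * P m + b m * d * C (m+1) * P (m+1) := by
      intro m
      rw [hPsucc, hCsucc]
      push_cast
      ring
    calc ∑ m ∈ Finset.range (r+1),
          (Db m * C m * P m + b m * C m * (((((n:ℤ) - m) : ℤ) : ℝ) * f y ^ ((n:ℤ) - m - 1) * d))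
        = ∑ m ∈ Finset.range (r+1), (Db m * C m * P m + b m * d * C (m+1) * P (m+1)) :=
          Finset.sum_congr rfl fun m _ => key m
      _ = ∑ m ∈ Finset.range (r+1), Db m * C m * P m
            + ∑ m ∈ Finset.range (r+1), b m * d * C (m+1) * P (m+1) :=
          Finset.sum_add_distrib
      _ = ∑ m ∈ Finset.range (r+2), Db m * C m * P m
            + ∑ m ∈ Finset.range (r+1), b m * d * C (m+1) * P (m+1) := by
          rw [Finset.sum_range_succ (f := fun m => Db m * C m * P m) (n := r+1)]
          have : Db (r+1) = 0 := derivWithin_wbell_eq_zero I f huniq (by omega) hy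
          rw [this]; ring
      _ = (Db 0 * C 0 * P 0 + ∑ m ∈ Finset.range (r+1), Db (m+1) * C (m+1) * P (m+1))
            + ∑ m ∈ Finset.range (r+1), b m * d * C (m+1) * P (m+1) := by
          rw [Finset.sum_range_succ' (f := fun m => Db m * C m * P m) (n := r+1)]
          ring
      _ = ∑ m ∈ Finset.range (r+1+1),
            wbell I f (r+1) m y * C m * P m := by
          rw [Finset.sum_range_succ' (f := fun m => wbell I f (r+1) m y * C m * P m) (n := r+1)]
          have hcong : ∀ m ∈ Finset.range (r+1), wbell I f (r+1) (m+1) y * C (m+1) * P (m+1)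
              = Db (m+1) * C (m+1) * P (m+1) + b m * d * C (m+1) * P (m+1) := by
            intro m _
            show (derivWithin (wbell I f r (m+1)) I y + wbell I f r m y * derivWithin f I y)
              * C (m+1) * P (m+1) = _
            show (Db (m+1) + b m * d) * C (m+1) * P (m+1) = _
            ring
          rw [Finset.sum_congr rfl hcong, Finset.sum_add_distrib,
            show wbell I f (r+1) 0 y = Db 0 from rfl]
          ring

lemma wronskian_pow_ne_zero (I : Set ℝ) (f : ℝ → ℝ) (huniq : UniqueDiffOn ℝ I)
    (hf : ContDiffOn ℝ (⊤ : ℕ∞) f I) (s : ℕ) (n : Fin s → ℕ)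
    (hn : Function.Injective fun c : Fin s => ((n c : ℕ) : ℝ))
    {x : ℝ} (hx : x ∈ I) (hfx : f x ≠ 0) (hdx : derivWithin f I x ≠ 0) :
    (Matrix.of fun r c : Fin s =>
      iteratedDerivWithin (r : ℕ) (fun y => f y ^ n c) I x).det ≠ 0 := by
  classical
  set B : Matrix (Fin s) (Fin s) ℝ := Matrix.of fun r m : Fin s => wbell I f r m x with hBdef
  set V : Matrix (Fin s) (Fin s) ℝ := Matrix.of fun m c : Fin s =>
    (descPochhammer ℝ (m : ℕ)).eval ((n c : ℕ) : ℝ) * f x ^ ((n c : ℤ) - (m : ℕ)) with hVdef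
  have hM : (Matrix.of fun r c : Fin s =>
      iteratedDerivWithin (r : ℕ) (fun y => f y ^ n c) I x) = B * V := by
    ext r c
    rw [Matrix.mul_apply, Matrix.of_apply, pow_rep I f huniq hf (n c) r x hx hfx]
    have h1 : ∑ m : Fin s, B r m * V m c
        = ∑ m ∈ Finset.range s, wbell I f r m x *
            ((descPochhammer ℝ m).eval ((n c : ℕ) : ℝ) * f x ^ ((n c : ℤ) - m)) :=
      Fin.sum_univ_eq_sum_range (fun m => wbell I f r m x *
            ((descPochhammer ℝ m).eval ((n c : ℕ) : ℝ) * f x ^ ((n c : ℤ) - m))) s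
    rw [h1]
    rw [Finset.sum_subset (Finset.range_subset_range.mpr (by omega : (r : ℕ) + 1 ≤ s))
      (fun m _ hm => by
        rw [wbell_eq_zero I f huniq r m (by simpa using hm) x hx]; ring)]
    exact Finset.sum_congr rfl fun m _ => mul_assoc _ _ _
  rw [hM, Matrix.det_mul]
  have hB : B.det ≠ 0 := by
    have htri : B.BlockTriangular OrderDual.toDual := by
      intro r m h
      exact wbell_eq_zero I f huniq r m (OrderDual.toDual_lt_toDual.mp h) x hx
    rw [Matrix.det_of_lowerTriangular B htri]
    refine Finset.prod_ne_zero_iff.mpr fun r _ => ?_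
    rw [show B r r = wbell I f (r : ℕ) (r : ℕ) x from rfl, wbell_diag I f huniq r x hx]
    exact pow_ne_zero _ hdx
  have hV : V.det ≠ 0 := by
    set W : Matrix (Fin s) (Fin s) ℝ :=
      Matrix.of fun i j : Fin s => (descPochhammer ℝ (j : ℕ)).eval ((n i : ℕ) : ℝ) with hW
    set A : Matrix (Fin s) (Fin s) ℝ :=
      Matrix.of fun m c : Fin s => f x ^ ((n c : ℤ)) * W.transpose m c with hA
    have hVfact : V = Matrix.of fun m c : Fin s => (f x ^ (-((m : ℕ) : ℤ))) * A m c := by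
      ext m c
      simp only [hVdef, hA, hW, Matrix.of_apply, Matrix.transpose_apply]
      rw [show ((n c : ℤ) - (m : ℕ)) = (n c : ℤ) + (-((m : ℕ) : ℤ)) by ring, zpow_add₀ hfx]
      ring
    rw [hVfact, Matrix.det_mul_column, hA, Matrix.det_mul_row, Matrix.det_transpose, hW,
      ← Matrix.det_eval_matrixOfPolynomials_eq_det_vandermonde
        (fun c : Fin s => ((n c : ℕ) : ℝ)) (fun m : Fin s => descPochhammer ℝ (m : ℕ))
        (fun m => descPochhammer_natDegree (R := ℝ) (m : ℕ)) (fun m => monic_descPochhammer ℝ (m : ℕ))]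
    refine mul_ne_zero (Finset.prod_ne_zero_iff.mpr fun m _ => zpow_ne_zero _ hfx)
      (mul_ne_zero (Finset.prod_ne_zero_iff.mpr fun c _ => zpow_ne_zero _ hfx) ?_)
    exact Matrix.det_vandermonde_ne_zero_iff.mpr hn
  exact mul_ne_zero hB hV


/-- If `f` is a non-constant analytic function on an interval `I` and `α_1, …, α_k` are
pairwise distinct natural numbers with `k ≥ 2`, then the set of zeros in `I` of the
Wronskians `W(f^{α_1+k}, …, f^{α_s+k})`, `1 ≤ s ≤ k`, is exactly the zero set of `f·f′`
in `I`. -/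
theorem stmt16 (k : ℕ) (hk : 2 ≤ k) (I : Set ℝ) (hI : I.OrdConnected) (hI' : I.Nontrivial)
    (f : ℝ → ℝ) (hf : AnalyticOn ℝ f I)
    (hnc : ∃ x ∈ I, ∃ y ∈ I, f x ≠ f y)
    (α : ℕ → ℕ) (hα : ∀ i < k, ∀ j < k, α i = α j → i = j) :
    {x ∈ I | ∃ s, 1 ≤ s ∧ s ≤ k ∧
        wronskianOn I (fun i y => f y ^ (α i + k)) s x = 0} =
      {x ∈ I | f x * derivWithin f I x = 0} := by
  have huniq : UniqueDiffOn ℝ I := by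
    obtain ⟨a, ha, b, hb, hab⟩ := hI'
    have hconv : Convex ℝ I := convex_iff_ordConnected.mpr hI
    apply uniqueDiffOn_convex hconv
    rcases hab.lt_or_gt with h | h
    · have hsub : Set.Ioo a b ⊆ I := fun z hz => hI.out ha hb ⟨hz.1.le, hz.2.le⟩
      exact ⟨(a+b)/2, interior_maximal hsub isOpen_Ioo ⟨by linarith, by linarith⟩⟩
    · have hsub : Set.Ioo b a ⊆ I := fun z hz => hI.out hb ha ⟨hz.1.le, hz.2.le⟩
      exact ⟨(a+b)/2, interior_maximal hsub isOpen_Ioo ⟨by linarith, by linarith⟩⟩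
  have hsm : ContDiffOn ℝ (⊤ : ℕ∞) f I := hf.contDiffOn huniq
  ext x
  simp only [Set.mem_setOf_eq]
  constructor
  · rintro ⟨hxI, s, hs1, hsk, hW⟩
    refine ⟨hxI, ?_⟩
    by_contra h
    rcases mul_ne_zero_iff.mp h with ⟨h1, h2⟩
    refine wronskian_pow_ne_zero I f huniq hsm s (fun c => α c + k) ?_ hxI h1 h2 hW
    intro c c' hcc
    have : α (c : ℕ) + k = α (c' : ℕ) + k := by
      have h3 : ((α (c : ℕ) + k : ℕ) : ℝ) = ((α (c' : ℕ) + k : ℕ) : ℝ) := hcc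
      exact_mod_cast h3
    have hupp : (c : ℕ) < k := lt_of_lt_of_le c.isLt hsk
    have hupp' : (c' : ℕ) < k := lt_of_lt_of_le c'.isLt hsk
    exact Fin.ext (hα _ hupp _ hupp' (by omega))
  · rintro ⟨hxI, hprod⟩
    refine ⟨hxI, ?_⟩
    rcases mul_eq_zero.mp hprod with h | h
    · refine ⟨1, le_refl 1, by omega, ?_⟩
      unfold wronskianOn
      rw [Matrix.det_fin_one]
      simp only [Matrix.of_apply]
      rw [show ((0 : Fin 1) : ℕ) = 0 from rfl, iteratedDerivWithin_zero]
      show f x ^ (α 0 + k) = 0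
      rw [h]
      exact zero_pow (by omega)
    · refine ⟨2, one_le_two, hk, ?_⟩
      unfold wronskianOn
      rw [Matrix.det_fin_two]
      have hrow : ∀ c : Fin 2,
          (Matrix.of fun r c : Fin 2 =>
            iteratedDerivWithin (r : ℕ) ((fun i y => f y ^ (α i + k)) (c : ℕ)) I x) 1 c = 0 := by
        intro c
        simp only [Matrix.of_apply]
        rw [show (((1 : Fin 2)) : ℕ) = 1 from rfl, iteratedDerivWithin_one]
        have hd : HasDerivWithinAt (fun y => f y ^ (α (c : ℕ) + k))
            (((α (c : ℕ) + k : ℕ) : ℝ) * f x ^ (α (c : ℕ) + k - 1) * derivWithin f I x) I x :=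
          ((hsm.differentiableOn (by simp)) x hxI).hasDerivWithinAt.pow _
        rw [hd.derivWithin (huniq x hxI), h, mul_zero]
      rw [hrow 0, hrow 1]
      ring
end
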